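/- arXiv:1409.1614 — 4 statements merged into one kernel-verified Lean document; each statement's English description precedes it below -/
import Mathlib

section
/- Let S be a finite nonempty set of positive integers, let π be a probability distribution on S, and for each i ∈ S let p_i ∈ [0,1]. Let f be a random S-map whose values f(i) are chosen independently so that with probability p_i the value f(i) is chosen from S according to π, and otherwise f(i) = 0. Then the probability that f has a cycle equals the expected number of fixed points of f, i.e. the expected number of i ∈ S with f(i) = i. -/
open MeasureTheory

/-- A cycle of a map `f` relative to a set `S`: a sequence `a 0, …, a (k-1)` of
elements of `S` with `f (a i) = a (i+1)` for `i < k - 1` and `f (a (k-1)) = a 0`. -/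
def HasCycle (S : Finset ℕ) (f : ℕ → ℕ) : Prop :=
  ∃ (k : ℕ) (a : ℕ → ℕ), 0 < k ∧ (∀ i < k, a i ∈ S) ∧
    (∀ i, i + 1 < k → f (a i) = a (i + 1)) ∧ f (a (k - 1)) = a 0

open Finset

noncomputable section
namespace CycleAux
open scoped Classical

/-- periodic points of `g` within finset `T` -/
def Per (T : Finset ℕ) (g : ℕ → ℕ) : Finset ℕ :=
  T.filter (fun i => ∃ k, 0 < k ∧ g^[k] i = i)

/-- patterns: maps that are 0 off `T` and take values in `V` on `T` -/
def patt (V T : Finset ℕ) : Finset (ℕ → ℕ) :=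
  (T.pi (fun _ => V)).image (fun f n => if h : n ∈ T then f n h else 0)

lemma mem_patt {V T : Finset ℕ} {g : ℕ → ℕ} :
    g ∈ patt V T ↔ (∀ n, n ∉ T → g n = 0) ∧ ∀ n ∈ T, g n ∈ V := by
  constructor
  · rintro hg
    simp only [patt, Finset.mem_image] at hg
    obtain ⟨f, hf, rfl⟩ := hg
    constructor
    · intro n hn; simp [hn]
    · intro n hn
      simp only [hn, dif_pos]
      exact Finset.mem_pi.1 hf n hn
  · rintro ⟨h0, hV⟩
    simp only [patt, Finset.mem_image]
    refine ⟨fun n _ => g n, Finset.mem_pi.2 (fun n hn => hV n hn), ?_⟩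
    funext n
    by_cases hn : n ∈ T
    · simp [hn]
    · simp [hn, h0 n hn]

def merge (C : Finset ℕ) (σ h : ℕ → ℕ) : ℕ → ℕ := fun n => if n ∈ C then σ n else h n

def restr (C : Finset ℕ) (g : ℕ → ℕ) : ℕ → ℕ := fun n => if n ∈ C then g n else 0

end CycleAux

namespace CycleAux

variable {S V T C : Finset ℕ}

lemma patt_zero_off {g : ℕ → ℕ} (hg : g ∈ patt V T) {n : ℕ} (hn : n ∉ T) : g n = 0 :=
  (mem_patt.1 hg).1 n hn

/-- if `i ∈ T` is periodic for a pattern on `T ⊆ S` (with `0 ∉ S`), its orbit stays in `T` -/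
lemma orbit_mem (hTS : T ⊆ S) (h0S : (0:ℕ) ∉ S)
    {g : ℕ → ℕ} (hg : g ∈ patt V T) {i : ℕ} (hi : i ∈ T)
    {k : ℕ} (hk : 0 < k) (hper : g^[k] i = i) : ∀ m, g^[m] i ∈ T := by
  have h0T : (0:ℕ) ∉ T := fun h => h0S (hTS h)
  have g0 : g 0 = 0 := patt_zero_off hg h0T
  intro m
  by_contra hm
  -- tail is zero
  have tail : ∀ l, g^[m + 1 + l] i = 0 := by
    intro l
    induction l with
    | zero =>
      show g^[m + 1] i = 0
      rw [Function.iterate_succ_apply']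
      exact patt_zero_off hg hm
    | succ l ih =>
      have : m + 1 + (l + 1) = (m + 1 + l) + 1 := by ring
      rw [this, Function.iterate_succ_apply', ih, g0]
  -- periodicity at multiples of k
  have hmul : ∀ n, g^[k * n] i = i := by
    intro n
    rw [Function.iterate_mul]
    exact Function.iterate_fixed hper n
  have hge : m + 1 ≤ k * (m + 1) := Nat.le_mul_of_pos_left _ hk
  obtain ⟨l, hl⟩ := Nat.exists_eq_add_of_le hge
  have := hmul (m + 1)
  rw [hl, tail l] at this
  exact h0T (this ▸ hi)

end CycleAux

namespace CycleAux
open scoped Classical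

variable {S V T C : Finset ℕ}

lemma mem_Per {g : ℕ → ℕ} {i : ℕ} : i ∈ Per T g ↔ i ∈ T ∧ ∃ k, 0 < k ∧ g^[k] i = i := by
  simp [Per]

lemma Per_subset {g : ℕ → ℕ} : Per T g ⊆ T := Finset.filter_subset _ _

lemma Per_mapsTo (hTS : T ⊆ S) (h0S : (0:ℕ) ∉ S) {g : ℕ → ℕ} (hg : g ∈ patt V T)
    {i : ℕ} (hi : i ∈ Per T g) : g i ∈ Per T g := by
  obtain ⟨hiT, k, hk, hper⟩ := mem_Per.1 hi
  refine mem_Per.2 ⟨by simpa using orbit_mem hTS h0S hg hiT hk hper 1, k, hk, ?_⟩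
  calc g^[k] (g i) = g^[k+1] i := (Function.iterate_succ_apply g k i).symm
  _ = g (g^[k] i) := Function.iterate_succ_apply' g k i
  _ = g i := by rw [hper]

lemma iterate_congr {g f : ℕ → ℕ} {A : Finset ℕ} {i : ℕ}
    (horb : ∀ m, g^[m] i ∈ A) (hagree : ∀ n ∈ A, g n = f n) :
    ∀ m, g^[m] i = f^[m] i := by
  intro m
  induction m with
  | zero => rfl
  | succ m ih =>
    rw [Function.iterate_succ_apply', Function.iterate_succ_apply', ← ih,
      hagree _ (horb m)]

/-- orbit of a periodic point of a pattern stays in its `Per` set -/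
lemma orbit_mem_Per (hTS : T ⊆ S) (h0S : (0:ℕ) ∉ S) {g : ℕ → ℕ} (hg : g ∈ patt V T)
    {i : ℕ} (hi : i ∈ Per T g) : ∀ m, g^[m] i ∈ Per T g := by
  intro m
  induction m with
  | zero => simpa using hi
  | succ m ih =>
    rw [Function.iterate_succ_apply']
    exact Per_mapsTo hTS h0S hg ih

end CycleAux

namespace CycleAux
open scoped Classical

variable {S V T C : Finset ℕ}

lemma restr_patt_of_subset {g : ℕ → ℕ} (hg : g ∈ patt V T) (hCT : C ⊆ T) :
    restr C g ∈ patt V C := by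
  refine mem_patt.2 ⟨fun n hn => by simp [restr, hn], fun n hn => ?_⟩
  simp only [restr, hn, if_pos]
  exact (mem_patt.1 hg).2 n (hCT hn)

lemma restr_cyc (hTS : T ⊆ S) (h0S : (0:ℕ) ∉ S) {g : ℕ → ℕ} (hg : g ∈ patt V T)
    (hPer : Per T g = C) : Per C (restr C g) = C := by
  refine Finset.Subset.antisymm Per_subset (fun i hi => ?_)
  have hi' : i ∈ Per T g := hPer ▸ hi
  obtain ⟨hiT, k, hk, hper⟩ := mem_Per.1 hi'
  have horb : ∀ m, g^[m] i ∈ C := fun m => hPer ▸ orbit_mem_Per hTS h0S hg hi' m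
  have hit : ∀ m, g^[m] i = (restr C g)^[m] i :=
    iterate_congr horb (fun n hn => by simp [restr, hn])
  exact mem_Per.2 ⟨hi, k, hk, by rw [← hit k]; exact hper⟩

lemma restr_acyc (hTS : T ⊆ S) (h0S : (0:ℕ) ∉ S) {g : ℕ → ℕ} (hg : g ∈ patt V T)
    (hPer : Per T g = C) : Per (T \ C) (restr (T \ C) g) = ∅ := by
  set U := T \ C with hU
  have hUS : U ⊆ S := fun n hn => hTS (Finset.sdiff_subset hn)
  have hgU : restr U g ∈ patt V U := restr_patt_of_subset hg Finset.sdiff_subset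
  refine Finset.eq_empty_of_forall_notMem (fun i hi => ?_)
  obtain ⟨hiU, k, hk, hper⟩ := mem_Per.1 hi
  have horb : ∀ m, (restr U g)^[m] i ∈ Per U (restr U g) :=
    orbit_mem_Per hUS h0S hgU hi
  have horbU : ∀ m, (restr U g)^[m] i ∈ U := fun m => Per_subset (horb m)
  have hit : ∀ m, (restr U g)^[m] i = g^[m] i :=
    iterate_congr horbU (fun n hn => by simp [restr, hn])
  have : i ∈ Per T g :=
    mem_Per.2 ⟨Finset.sdiff_subset hiU, k, hk, by rw [← hit k]; exact hper⟩
  rw [hPer] at this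
  exact (Finset.mem_sdiff.1 hiU).2 this

end CycleAux

namespace CycleAux
open scoped Classical

variable {S V T C : Finset ℕ}

lemma merge_patt (hCT : C ⊆ T) {σ h : ℕ → ℕ}
    (hσ : σ ∈ patt V C) (hh : h ∈ patt V (T \ C)) :
    merge C σ h ∈ patt V T := by
  refine mem_patt.2 ⟨fun n hn => ?_, fun n hn => ?_⟩
  · have hnC : n ∉ C := fun hc => hn (hCT hc)
    simp only [merge, hnC, if_neg, if_false]
    exact patt_zero_off hh (by simp [Finset.mem_sdiff, hn])
  · by_cases hc : n ∈ C
    · simpa [merge, hc] using (mem_patt.1 hσ).2 n hc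
    · simpa [merge, hc] using (mem_patt.1 hh).2 n (Finset.mem_sdiff.2 ⟨hn, hc⟩)

lemma merge_Per (hTS : T ⊆ S) (h0S : (0:ℕ) ∉ S) (hCT : C ⊆ T) {σ h : ℕ → ℕ}
    (hσ : σ ∈ patt V C) (hσc : Per C σ = C)
    (hh : h ∈ patt V (T \ C)) (hhc : Per (T \ C) h = ∅) :
    Per T (merge C σ h) = C := by
  set U := T \ C with hU
  set g := merge C σ h with hgdef
  have hCS : C ⊆ S := fun n hn => hTS (hCT hn)
  have hUS : U ⊆ S := fun n hn => hTS (Finset.sdiff_subset hn)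
  have hg : g ∈ patt V T := merge_patt hCT hσ hh
  have hgC : ∀ n ∈ C, g n = σ n := fun n hn => by simp [hgdef, merge, hn]
  have hgU : ∀ n ∈ U, g n = h n := fun n hn => by
    simp [hgdef, merge, (Finset.mem_sdiff.1 hn).2]
  -- g maps C into C
  have hmapC : ∀ n ∈ C, g n ∈ C := by
    intro n hn
    rw [hgC n hn]
    have := Per_mapsTo hCS h0S hσ (hσc.symm ▸ hn : n ∈ Per C σ)
    rwa [hσc] at this
  apply Finset.Subset.antisymm
  · -- Per T g ⊆ C
    intro i hi
    by_contra hiC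
    obtain ⟨hiT, k, hk, hper⟩ := mem_Per.1 hi
    have hiU : i ∈ U := Finset.mem_sdiff.2 ⟨hiT, hiC⟩
    -- orbit of i avoids C
    have horbnC : ∀ m, g^[m] i ∉ C := by
      intro m hm
      -- once in C, stays in C
      have fwd : ∀ l, g^[m + l] i ∈ C := by
        intro l
        induction l with
        | zero => simpa using hm
        | succ l ih =>
          have : m + (l+1) = (m + l) + 1 := rfl
          rw [this, Function.iterate_succ_apply']
          exact hmapC _ ih
      have hmul : g^[k * (m + 1)] i = i := by
        rw [Function.iterate_mul]; exact Function.iterate_fixed hper _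
      obtain ⟨l, hl⟩ := Nat.exists_eq_add_of_le (Nat.le_mul_of_pos_left (m+1) hk)
      have : g^[k * (m+1)] i ∈ C := by
        rw [hl, show m + 1 + l = m + (1 + l) from by ring]; exact fwd (1 + l)
      rw [hmul] at this
      exact hiC this
    have horbU : ∀ m, g^[m] i ∈ U := by
      intro m
      exact Finset.mem_sdiff.2 ⟨Per_subset (orbit_mem_Per hTS h0S hg hi m), horbnC m⟩
    have hit : ∀ m, g^[m] i = h^[m] i :=
      iterate_congr horbU (fun n hn => (hgU n hn))
    have : i ∈ Per U h := mem_Per.2 ⟨hiU, k, hk, by rw [← hit k]; exact hper⟩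
    rw [hhc] at this
    exact absurd this (Finset.notMem_empty i)
  · -- C ⊆ Per T g
    intro i hi
    have hiP : i ∈ Per C σ := hσc.symm ▸ hi
    obtain ⟨hiC, k, hk, hper⟩ := mem_Per.1 hiP
    have horb : ∀ m, σ^[m] i ∈ C := fun m => hσc ▸ orbit_mem_Per hCS h0S hσ hiP m
    have hit : ∀ m, σ^[m] i = g^[m] i :=
      iterate_congr horb (fun n hn => (hgC n hn).symm)
    exact mem_Per.2 ⟨hCT hi, k, hk, by rw [← hit k]; exact hper⟩

lemma restr_merge_left {σ h : ℕ → ℕ} (hσ : σ ∈ patt V C) :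
    restr C (merge C σ h) = σ := by
  funext n
  by_cases hn : n ∈ C
  · simp [restr, merge, hn]
  · simp [restr, merge, hn, (patt_zero_off hσ hn).symm]

lemma restr_merge_right {U : Finset ℕ} (hdisj : Disjoint C U) {σ h : ℕ → ℕ}
    (hh : h ∈ patt V U) : restr U (merge C σ h) = h := by
  funext n
  by_cases hn : n ∈ U
  · have hnC : n ∉ C := fun hc => (Finset.disjoint_left.1 hdisj) hc hn
    simp [restr, merge, hn, hnC]
  · simp [restr, hn, (patt_zero_off hh hn).symm]

lemma merge_restr (hCT : C ⊆ T) {g : ℕ → ℕ} (hg : g ∈ patt V T) :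
    merge C (restr C g) (restr (T \ C) g) = g := by
  funext n
  by_cases hc : n ∈ C
  · simp [merge, restr, hc]
  · by_cases ht : n ∈ T
    · simp [merge, restr, hc, Finset.mem_sdiff.2 ⟨ht, hc⟩]
    · have hnU : n ∉ T \ C := fun hu => ht (Finset.mem_sdiff.1 hu).1
      simp [merge, restr, hc, hnU, (patt_zero_off hg ht).symm]

end CycleAux

namespace CycleAux
open scoped Classical

variable {S V T C : Finset ℕ}

def cycP (V C : Finset ℕ) : Finset (ℕ → ℕ) := (patt V C).filter (fun σ => Per C σ = C)

def acycP (V U : Finset ℕ) : Finset (ℕ → ℕ) := (patt V U).filter (fun h => Per U h = ∅)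

lemma sum_patt_decomp (hTS : T ⊆ S) (h0S : (0:ℕ) ∉ S) (φ : (ℕ → ℕ) → ℝ) :
    ∑ g ∈ patt V T, φ g =
      ∑ C ∈ T.powerset, ∑ q ∈ cycP V C ×ˢ acycP V (T \ C), φ (merge C q.1 q.2) := by
  rw [← Finset.sum_fiberwise_of_maps_to
    (fun g (_ : g ∈ patt V T) => Finset.mem_powerset.2 (Per_subset : Per T g ⊆ T)) φ]
  refine Finset.sum_congr rfl (fun C hC => ?_)
  have hCT : C ⊆ T := Finset.mem_powerset.1 hC
  refine Finset.sum_nbij' (fun g => (restr C g, restr (T \ C) g))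
    (fun q => merge C q.1 q.2) ?_ ?_ ?_ ?_ ?_
  · intro g hg
    obtain ⟨hg, hPer⟩ := Finset.mem_filter.1 hg
    refine Finset.mem_product.2 ⟨Finset.mem_filter.2 ⟨restr_patt_of_subset hg hCT,
      restr_cyc hTS h0S hg hPer⟩, Finset.mem_filter.2 ⟨restr_patt_of_subset hg
      Finset.sdiff_subset, restr_acyc hTS h0S hg hPer⟩⟩
  · intro q hq
    obtain ⟨h1, h2⟩ := Finset.mem_product.1 hq
    obtain ⟨hσ, hσc⟩ := Finset.mem_filter.1 h1
    obtain ⟨hh, hhc⟩ := Finset.mem_filter.1 h2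
    exact Finset.mem_filter.2 ⟨merge_patt hCT hσ hh, merge_Per hTS h0S hCT hσ hσc hh hhc⟩
  · intro g hg
    exact merge_restr hCT (Finset.mem_filter.1 hg).1
  · intro q hq
    obtain ⟨h1, h2⟩ := Finset.mem_product.1 hq
    obtain ⟨hσ, _⟩ := Finset.mem_filter.1 h1
    obtain ⟨hh, _⟩ := Finset.mem_filter.1 h2
    have e1 : restr C (merge C q.1 q.2) = q.1 := restr_merge_left hσ
    have e2 : restr (T \ C) (merge C q.1 q.2) = q.2 :=
      restr_merge_right Finset.disjoint_sdiff hh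
    simp [e1, e2]
  · intro g hg
    rw [merge_restr hCT (Finset.mem_filter.1 hg).1]

end CycleAux

namespace CycleAux
open scoped Classical

variable {S V T C : Finset ℕ}

lemma sum_patt_split (hCT : C ⊆ T) (φ : (ℕ → ℕ) → ℝ) :
    ∑ g ∈ patt V T, φ g =
      ∑ q ∈ patt V C ×ˢ patt V (T \ C), φ (merge C q.1 q.2) := by
  refine Finset.sum_nbij' (fun g => (restr C g, restr (T \ C) g))
    (fun q => merge C q.1 q.2) ?_ ?_ ?_ ?_ ?_
  · intro g hg
    exact Finset.mem_product.2 ⟨restr_patt_of_subset hg hCT,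
      restr_patt_of_subset hg Finset.sdiff_subset⟩
  · intro q hq
    obtain ⟨h1, h2⟩ := Finset.mem_product.1 hq
    exact merge_patt hCT h1 h2
  · intro g hg
    exact merge_restr hCT hg
  · intro q hq
    obtain ⟨h1, h2⟩ := Finset.mem_product.1 hq
    have e1 : restr C (merge C q.1 q.2) = q.1 := restr_merge_left h1
    have e2 : restr (T \ C) (merge C q.1 q.2) = q.2 :=
      restr_merge_right Finset.disjoint_sdiff h2
    simp [e1, e2]
  · intro g hg
    rw [merge_restr hCT hg]

lemma sum_patt_singleton (a : ℕ) (φ : (ℕ → ℕ) → ℝ) :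
    ∑ g ∈ patt V {a}, φ g = ∑ v ∈ V, φ (fun n => if n = a then v else 0) := by
  refine Finset.sum_nbij' (fun g => g a) (fun v n => if n = a then v else 0)
    ?_ ?_ ?_ ?_ ?_
  · intro g hg
    exact (mem_patt.1 hg).2 a (Finset.mem_singleton_self a)
  · intro v hv
    refine mem_patt.2 ⟨fun n hn => ?_, fun n hn => ?_⟩
    · simp only [Finset.mem_singleton] at hn; simp [hn]
    · simp only [Finset.mem_singleton] at hn; simp [hn, hv]
  · intro g hg
    funext n
    by_cases hn : n = a
    · simp [hn]
    · simp [hn, (patt_zero_off hg (by simp [hn]) : g n = 0).symm]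
  · intro v hv; simp
  · intro g hg
    congr 1
    funext n
    by_cases hn : n = a
    · simp [hn]
    · simp [hn, (patt_zero_off hg (by simp [hn]) : g n = 0).symm]

variable (wt : ℕ → ℕ → ℝ)

def w (wt : ℕ → ℕ → ℝ) (T : Finset ℕ) (g : ℕ → ℕ) : ℝ := ∏ i ∈ T, wt i (g i)

lemma w_merge (hCT : C ⊆ T) (σ h : ℕ → ℕ) :
    w wt T (merge C σ h) = w wt C σ * w wt (T \ C) h := by
  unfold w
  rw [show T = C ∪ T \ C from (Finset.union_sdiff_of_subset hCT).symm,
    Finset.prod_union Finset.disjoint_sdiff]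
  congr 1
  · exact Finset.prod_congr rfl (fun i hi => by simp [merge, hi])
  · refine Finset.prod_congr (by rw [Finset.union_sdiff_of_subset hCT]) (fun i hi => ?_)
    simp [merge, (Finset.mem_sdiff.1 hi).2]

end CycleAux

namespace CycleAux
open scoped Classical

variable {S T C : Finset ℕ} {wt : ℕ → ℕ → ℝ}

def W (V : Finset ℕ) (wt : ℕ → ℕ → ℝ) (T : Finset ℕ) : ℝ := ∑ g ∈ patt V T, w wt T g
def K (V : Finset ℕ) (wt : ℕ → ℕ → ℝ) (C : Finset ℕ) : ℝ := ∑ g ∈ cycP V C, w wt C g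
def A (V : Finset ℕ) (wt : ℕ → ℕ → ℝ) (U : Finset ℕ) : ℝ := ∑ g ∈ acycP V U, w wt U g

variable {V : Finset ℕ}

lemma W_decomp (hTS : T ⊆ S) (h0S : (0:ℕ) ∉ S) :
    W V wt T = ∑ C ∈ T.powerset, K V wt C * A V wt (T \ C) := by
  rw [W, sum_patt_decomp hTS h0S]
  refine Finset.sum_congr rfl (fun C hC => ?_)
  have hCT : C ⊆ T := Finset.mem_powerset.1 hC
  rw [K, A, Finset.sum_mul_sum, Finset.sum_product]
  exact Finset.sum_congr rfl (fun σ _ => Finset.sum_congr rfl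
    (fun h _ => w_merge wt hCT σ h))

lemma W_eq_one (hnorm : ∀ i ∈ T, ∑ v ∈ V, wt i v = 1) : W V wt T = 1 := by
  induction T using Finset.induction_on with
  | empty =>
    rw [W]
    have : patt V (∅ : Finset ℕ) = {fun _ => 0} := by
      apply Finset.eq_singleton_iff_unique_mem.2
      constructor
      · exact mem_patt.2 ⟨fun n _ => rfl, fun n hn => absurd hn (Finset.notMem_empty n)⟩
      · intro g hg
        funext n
        exact patt_zero_off hg (Finset.notMem_empty n)
    rw [this, Finset.sum_singleton, w, Finset.prod_empty]
  | insert a T' ha ih =>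
    rw [W, sum_patt_split (Finset.singleton_subset_iff.2 (Finset.mem_insert_self a T')),
      Finset.sum_product]
    have hsd : insert a T' \ {a} = T' := by
      rw [Finset.sdiff_singleton_eq_erase, Finset.erase_insert ha]
    calc ∑ σ ∈ patt V {a}, ∑ h ∈ patt V (insert a T' \ {a}),
          w wt (insert a T') (merge {a} σ h)
        = ∑ σ ∈ patt V {a}, ∑ h ∈ patt V T', w wt {a} σ * w wt T' h := by
          rw [hsd]
          exact Finset.sum_congr rfl (fun σ _ => Finset.sum_congr rfl (fun h _ => by
            rw [w_merge wt (Finset.singleton_subset_iff.2 (Finset.mem_insert_self a T')) σ h,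
              hsd]))
      _ = (∑ σ ∈ patt V {a}, w wt {a} σ) * (∑ h ∈ patt V T', w wt T' h) := by
          rw [Finset.sum_mul]
          exact Finset.sum_congr rfl (fun σ _ => by rw [Finset.mul_sum])
      _ = 1 := by
          have h1 : (∑ σ ∈ patt V {a}, w wt {a} σ) = ∑ v ∈ V, wt a v := by
            rw [sum_patt_singleton a (fun g => w wt {a} g)]
            exact Finset.sum_congr rfl (fun v _ => by simp [w])
          have h2 : (∑ h ∈ patt V T', w wt T' h) = 1 :=
            ih (fun i hi => hnorm i (Finset.mem_insert_of_mem hi))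
          rw [h1, h2, hnorm a (Finset.mem_insert_self a T'), one_mul]

end CycleAux

namespace CycleAux
open scoped Classical

variable {S T C V : Finset ℕ} {wt : ℕ → ℕ → ℝ}

lemma cycP_bijOn (hCS : C ⊆ S) (h0S : (0:ℕ) ∉ S) {σ : ℕ → ℕ}
    (hσ : σ ∈ cycP V C) : Set.BijOn σ C C := by
  obtain ⟨hσp, hσc⟩ := Finset.mem_filter.1 hσ
  have hmaps : ∀ i ∈ C, σ i ∈ C := by
    intro i hi
    have := Per_mapsTo hCS h0S hσp (hσc.symm ▸ hi : i ∈ Per C σ)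
    rwa [hσc] at this
  have hinj : Set.InjOn σ C := by
    intro i hi j hj hij
    obtain ⟨_, k, hk, hki⟩ := mem_Per.1 (hσc.symm ▸ hi : i ∈ Per C σ)
    obtain ⟨_, m, hm, hmj⟩ := mem_Per.1 (hσc.symm ▸ hj : j ∈ Per C σ)
    have hNi : σ^[k * m] i = i := by
      rw [Function.iterate_mul]; exact Function.iterate_fixed hki m
    have hNj : σ^[k * m] j = j := by
      rw [mul_comm, Function.iterate_mul]; exact Function.iterate_fixed hmj k
    have hN : 0 < k * m := Nat.mul_pos hk hm
    obtain ⟨N, hN1⟩ : ∃ N, k * m = N + 1 := ⟨k * m - 1, (Nat.succ_pred_eq_of_pos hN).symm⟩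
    calc i = σ^[k*m] i := hNi.symm
      _ = σ^[N] (σ i) := by rw [hN1, Function.iterate_succ_apply]
      _ = σ^[N] (σ j) := by rw [hij]
      _ = σ^[k*m] j := by rw [hN1, Function.iterate_succ_apply]
      _ = j := hNj
  exact (Set.Finite.injOn_iff_bijOn_of_mapsTo (C : Set ℕ).toFinite
    (fun i hi => hmaps i hi)).1 hinj

def toPatt (C : Finset ℕ) (e : Equiv.Perm {x // x ∈ C}) : ℕ → ℕ :=
  fun n => if h : n ∈ C then (e ⟨n, h⟩ : ℕ) else 0

lemma toPatt_iterate (C : Finset ℕ) (e : Equiv.Perm {x // x ∈ C}) {i : ℕ} (hi : i ∈ C) :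
    ∀ m, (toPatt C e)^[m] i = ((e ^ m) ⟨i, hi⟩ : ℕ) := by
  intro m
  induction m with
  | zero => simp
  | succ m ih =>
    rw [Function.iterate_succ_apply', ih, toPatt]
    have hmem : (((e ^ m) ⟨i, hi⟩ : {x // x ∈ C}) : ℕ) ∈ C := ((e ^ m) ⟨i, hi⟩).2
    rw [dif_pos hmem, pow_succ']
    simp

lemma card_cycP (hCS : C ⊆ S) (h0S : (0:ℕ) ∉ S) (hSV : S ⊆ V) :
    (cycP V C).card = (Nat.factorial C.card) := by
  have := Finset.card_bij (s := (Finset.univ : Finset (Equiv.Perm {x // x ∈ C})))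
    (t := cycP V C) (i := fun e _ => toPatt C e) ?_ ?_ ?_
  · rw [← this, Finset.card_univ, Fintype.card_perm, Fintype.card_coe]
  · -- membership
    intro e _
    refine Finset.mem_filter.2 ⟨mem_patt.2 ⟨fun n hn => by simp [toPatt, hn], fun n hn => ?_⟩, ?_⟩
    · simp only [toPatt, dif_pos hn]
      exact hSV (hCS (e ⟨n, hn⟩).2)
    · refine Finset.Subset.antisymm Per_subset (fun i hi => ?_)
      refine mem_Per.2 ⟨hi, orderOf e, orderOf_pos e, ?_⟩
      rw [toPatt_iterate C e hi, pow_orderOf_eq_one e]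
      rfl
  · -- injective
    intro e _ e' _ hee
    ext x
    have := congrFun hee x.1
    simp only [toPatt, dif_pos x.2] at this
    exact_mod_cast this
  · -- surjective
    intro σ hσ
    have hbij := cycP_bijOn hCS h0S hσ
    have hmaps : ∀ x : {x // x ∈ C}, σ x.1 ∈ C := fun x => hbij.1 x.2
    set u : {x // x ∈ C} → {x // x ∈ C} := fun x => ⟨σ x.1, hmaps x⟩ with hu
    have huinj : Function.Injective u := by
      intro x y hxy
      exact Subtype.ext (hbij.2.1 x.2 y.2 (congrArg Subtype.val hxy))
    have hub : Function.Bijective u := Finite.injective_iff_bijective.1 huinj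
    refine ⟨Equiv.ofBijective u hub, Finset.mem_univ _, ?_⟩
    funext n
    by_cases hn : n ∈ C
    · simp only [toPatt, dif_pos hn]
      rfl
    · simp only [toPatt, dif_neg hn]
      exact (patt_zero_off (Finset.mem_filter.1 hσ).1 hn).symm

lemma K_eq (hCS : C ⊆ S) (h0S : (0:ℕ) ∉ S) (hSV : S ⊆ V)
    {p π : ℕ → ℝ} (hprod : ∀ i ∈ S, ∀ j ∈ S, wt i j = p i * π j) :
    K V wt C = (Nat.factorial C.card) * ∏ i ∈ C, (p i * π i) := by
  have hterm : ∀ σ ∈ cycP V C, w wt C σ = ∏ i ∈ C, (p i * π i) := by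
    intro σ hσ
    have hbij := cycP_bijOn hCS h0S hσ
    have h1 : w wt C σ = ∏ i ∈ C, (p i * π (σ i)) := by
      refine Finset.prod_congr rfl (fun i hi => ?_)
      exact hprod i (hCS hi) (σ i) (hCS (hbij.1 hi))
    rw [h1]
    rw [Finset.prod_mul_distrib, Finset.prod_mul_distrib]
    congr 1
    exact Finset.prod_nbij σ (fun a ha => hbij.1 ha) (fun a ha b hb => hbij.2.1 ha hb)
      (by intro b hb; exact hbij.2.2 hb) (fun a _ => rfl)
  rw [K, Finset.sum_congr rfl hterm, Finset.sum_const, nsmul_eq_mul,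
    card_cycP hCS h0S hSV]

end CycleAux

namespace CycleAux
open scoped Classical

variable {S T C V : Finset ℕ} {wt : ℕ → ℕ → ℝ}

/-- the key combinatorial identity -/
lemma ident (T : Finset ℕ) (q : ℕ → ℝ) :
    ∑ C ∈ T.powerset.filter (fun C => C.Nonempty),
        (Nat.factorial C.card * ∏ i ∈ C, q i) * (1 - ∑ i ∈ T \ C, q i)
      = ∑ i ∈ T, q i := by
  have expand : ∀ C : Finset ℕ,
      (Nat.factorial C.card * ∏ i ∈ C, q i) * (1 - ∑ i ∈ T \ C, q i)
      = (Nat.factorial C.card * ∏ i ∈ C, q i)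
        - ∑ i ∈ T \ C, (Nat.factorial C.card * ∏ j ∈ C, q j) * q i := by
    intro C
    rw [mul_sub, mul_one, Finset.mul_sum]
  rw [Finset.sum_congr rfl (fun C _ => expand C), Finset.sum_sub_distrib]
  -- reindex the double sum
  have reindex :
      ∑ C ∈ T.powerset.filter (fun C => C.Nonempty),
          ∑ i ∈ T \ C, (Nat.factorial C.card * ∏ j ∈ C, q j) * q i
      = ∑ D ∈ T.powerset.filter (fun D => 2 ≤ D.card),
          ∑ i ∈ D, (Nat.factorial (D.erase i).card * ∏ j ∈ D.erase i, q j) * q i := by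
    rw [Finset.sum_sigma', Finset.sum_sigma']
    refine Finset.sum_nbij' (fun x => ⟨insert x.2 x.1, x.2⟩)
      (fun x => ⟨x.1.erase x.2, x.2⟩) ?_ ?_ ?_ ?_ ?_
    · rintro ⟨C, i⟩ hx
      simp only [Finset.mem_sigma, Finset.mem_filter] at hx ⊢
      obtain ⟨⟨hpow, hne⟩, hi⟩ := hx
      have hiT : i ∈ T := (Finset.mem_sdiff.1 hi).1
      have hiC : i ∉ C := (Finset.mem_sdiff.1 hi).2
      refine ⟨⟨Finset.mem_powerset.2 (Finset.insert_subset hiT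
        (Finset.mem_powerset.1 hpow)), ?_⟩, Finset.mem_insert_self _ _⟩
      rw [Finset.card_insert_of_notMem hiC]
      obtain ⟨a, ha⟩ := hne
      have : 1 ≤ C.card := Finset.card_pos.2 ⟨a, ha⟩
      omega
    · rintro ⟨D, i⟩ hx
      simp only [Finset.mem_sigma, Finset.mem_filter] at hx ⊢
      obtain ⟨⟨hpow, hcard⟩, hi⟩ := hx
      refine ⟨⟨Finset.mem_powerset.2 ((Finset.erase_subset _ _).trans
        (Finset.mem_powerset.1 hpow)), ?_⟩, ?_⟩
      · rw [← Finset.card_pos, Finset.card_erase_of_mem hi]; omega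
      · exact Finset.mem_sdiff.2 ⟨Finset.mem_powerset.1 hpow hi,
          Finset.notMem_erase i D⟩
    · rintro ⟨C, i⟩ hx
      simp only [Finset.mem_sigma, Finset.mem_filter] at hx
      have hiC : i ∉ C := (Finset.mem_sdiff.1 hx.2).2
      simp [Finset.erase_insert hiC]
    · rintro ⟨D, i⟩ hx
      simp only [Finset.mem_sigma, Finset.mem_filter] at hx
      simp [Finset.insert_erase hx.2]
    · rintro ⟨C, i⟩ hx
      simp only [Finset.mem_sigma, Finset.mem_filter] at hx
      have hiC : i ∉ C := (Finset.mem_sdiff.1 hx.2).2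
      simp [Finset.erase_insert hiC]
  rw [reindex]
  -- compute inner sums on the D-side
  have inner : ∀ D ∈ T.powerset.filter (fun D => 2 ≤ D.card),
      ∑ i ∈ D, (Nat.factorial (D.erase i).card * ∏ j ∈ D.erase i, q j) * q i
      = Nat.factorial D.card * ∏ j ∈ D, q j := by
    intro D hD
    simp only [Finset.mem_filter] at hD
    have hcard : ∀ i ∈ D, (D.erase i).card = D.card - 1 :=
      fun i hi => Finset.card_erase_of_mem hi
    have step : ∀ i ∈ D,
        (Nat.factorial (D.erase i).card * ∏ j ∈ D.erase i, q j) * q i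
        = Nat.factorial (D.card - 1) * ∏ j ∈ D, q j := by
      intro i hi
      rw [hcard i hi, mul_assoc, Finset.prod_erase_mul _ _ hi]
    rw [Finset.sum_congr rfl step, Finset.sum_const, nsmul_eq_mul]
    have : (D.card : ℝ) * (Nat.factorial (D.card - 1) * ∏ j ∈ D, q j)
        = (D.card * Nat.factorial (D.card - 1) : ℕ) * ∏ j ∈ D, q j := by
      push_cast; ring
    rw [this]
    congr 2
    have h2 : 1 ≤ D.card := by omega
    rw [← Nat.succ_pred_eq_of_pos (by omega : 0 < D.card)]
    simp [Nat.factorial_succ]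
  rw [Finset.sum_congr rfl inner]
  -- now: sum over nonempty C minus sum over card ≥ 2 = sum over singletons
  have split : T.powerset.filter (fun C => C.Nonempty)
      = (T.powerset.filter (fun C => C.card = 1)) ∪
        (T.powerset.filter (fun C => 2 ≤ C.card)) := by
    ext C
    simp only [Finset.mem_filter, Finset.mem_union]
    constructor
    · rintro ⟨hp, hne⟩
      have : 1 ≤ C.card := Finset.card_pos.2 hne
      rcases Nat.eq_or_lt_of_le this with h | h
      · exact Or.inl ⟨hp, h.symm⟩
      · exact Or.inr ⟨hp, h⟩
    · rintro (⟨hp, h⟩ | ⟨hp, h⟩) <;>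
        exact ⟨hp, Finset.card_pos.1 (by omega)⟩
  have hdisj : Disjoint (T.powerset.filter (fun C => C.card = 1))
      (T.powerset.filter (fun C => 2 ≤ C.card)) := by
    rw [Finset.disjoint_left]
    intro C h1 h2
    simp only [Finset.mem_filter] at h1 h2
    omega
  rw [split, Finset.sum_union hdisj]
  have singl : ∑ C ∈ T.powerset.filter (fun C => C.card = 1),
      (Nat.factorial C.card * ∏ i ∈ C, q i) = ∑ i ∈ T, q i := by
    refine (Finset.sum_bij (fun (a : ℕ) (_ : a ∈ T) => ({a} : Finset ℕ)) ?_ ?_ ?_ ?_).symm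
    · intro a ha
      refine Finset.mem_filter.2 ⟨Finset.mem_powerset.2 (Finset.singleton_subset_iff.2 ha), ?_⟩
      simp
    · intro a _ b _ h
      exact Finset.singleton_injective h
    · intro C hC
      obtain ⟨hp, hc⟩ := Finset.mem_filter.1 hC
      obtain ⟨a, rfl⟩ := Finset.card_eq_one.1 hc
      exact ⟨a, Finset.mem_powerset.1 hp (Finset.mem_singleton_self a), rfl⟩
    · intro a _
      simp [Nat.factorial]
  rw [singl]
  ring

end CycleAux

namespace CycleAux
open scoped Classical

variable {S V : Finset ℕ} {wt : ℕ → ℕ → ℝ} {p π : ℕ → ℝ}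

lemma A_eq (h0S : (0:ℕ) ∉ S) (hSV : S ⊆ V)
    (hnorm : ∀ i ∈ S, ∑ v ∈ V, wt i v = 1)
    (hprod : ∀ i ∈ S, ∀ j ∈ S, wt i j = p i * π j) :
    ∀ T : Finset ℕ, T ⊆ S → A V wt T = 1 - ∑ i ∈ T, (p i * π i) := by
  intro T
  induction T using Finset.strongInductionOn with
  | _ T ih =>
    intro hTS
    have hW : W V wt T = 1 := W_eq_one (fun i hi => hnorm i (hTS hi))
    rw [W_decomp hTS h0S] at hW
    have hmem : (∅ : Finset ℕ) ∈ T.powerset := Finset.empty_mem_powerset T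
    rw [← Finset.sum_erase_add _ _ hmem] at hW
    have hK0 : K V wt ∅ * A V wt (T \ ∅) = A V wt T := by
      rw [K_eq (Finset.empty_subset S) h0S hSV hprod]
      simp
    rw [hK0] at hW
    have herase : T.powerset.erase ∅ = T.powerset.filter (fun C => C.Nonempty) := by
      ext C
      simp [Finset.mem_erase, Finset.nonempty_iff_ne_empty, and_comm]
    rw [herase] at hW
    have hterm : ∀ C ∈ T.powerset.filter (fun C => C.Nonempty),
        K V wt C * A V wt (T \ C)
        = (Nat.factorial C.card * ∏ i ∈ C, (p i * π i)) * (1 - ∑ i ∈ T \ C, (p i * π i)) := by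
      intro C hC
      obtain ⟨hpow, hne⟩ := Finset.mem_filter.1 hC
      have hCT : C ⊆ T := Finset.mem_powerset.1 hpow
      have hssub : T \ C ⊂ T := by
        obtain ⟨a, ha⟩ := hne
        refine Finset.ssubset_iff_of_subset Finset.sdiff_subset |>.2 ⟨a, hCT ha, ?_⟩
        simp [ha]
      rw [K_eq (hCT.trans hTS) h0S hSV hprod,
        ih _ hssub (Finset.sdiff_subset.trans hTS)]
    rw [Finset.sum_congr rfl hterm, ident T (fun i => p i * π i)] at hW
    linarith
end CycleAux

namespace CycleAux
open scoped Classical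

variable {S V : Finset ℕ} {wt : ℕ → ℕ → ℝ} {p π : ℕ → ℝ}

lemma hasCycle_iff (h0S : (0:ℕ) ∉ S) {g : ℕ → ℕ} (hg : g ∈ patt V S) :
    HasCycle S g ↔ (Per S g).Nonempty := by
  constructor
  · rintro ⟨k, a, hk, haS, hstep, hlast⟩
    refine ⟨a 0, mem_Per.2 ⟨haS 0 hk, k, hk, ?_⟩⟩
    have key : ∀ i, i < k → g^[i] (a 0) = a i := by
      intro i
      induction i with
      | zero => intro _; rfl
      | succ i ih =>
        intro hik
        rw [Function.iterate_succ_apply', ih (by omega), hstep i hik]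
    have hk1 : k = (k - 1) + 1 := by omega
    rw [hk1, Function.iterate_succ_apply', key (k-1) (by omega), hlast]
  · rintro ⟨i, hi⟩
    obtain ⟨hiS, k, hk, hper⟩ := mem_Per.1 hi
    refine ⟨k, fun m => g^[m] i, hk, fun m _ => orbit_mem le_rfl h0S hg hiS hk hper m,
      fun m _ => (Function.iterate_succ_apply' g m i).symm, ?_⟩
    show g (g^[k-1] i) = g^[0] i
    rw [← Function.iterate_succ_apply' g (k-1) i]
    simp only [Nat.succ_eq_add_one]
    rw [show k - 1 + 1 = k from by omega, hper]
    rfl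

lemma cyc_sum (h0S : (0:ℕ) ∉ S) (hSV : S ⊆ V)
    (hnorm : ∀ i ∈ S, ∑ v ∈ V, wt i v = 1)
    (hprod : ∀ i ∈ S, ∀ j ∈ S, wt i j = p i * π j) :
    ∑ g ∈ (patt V S).filter (fun g => HasCycle S g), w wt S g = ∑ i ∈ S, p i * π i := by
  have hsplit := Finset.sum_filter_add_sum_filter_not (patt V S)
    (fun g => HasCycle S g) (w wt S)
  have hfilt : (patt V S).filter (fun g => ¬ HasCycle S g) = acycP V S := by
    unfold acycP
    refine Finset.filter_congr (fun g hg => ?_)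
    rw [hasCycle_iff h0S hg, Finset.nonempty_iff_ne_empty]
    tauto
  have hW : W V wt S = 1 := W_eq_one hnorm
  have hA : A V wt S = 1 - ∑ i ∈ S, p i * π i :=
    A_eq h0S hSV hnorm hprod S le_rfl
  rw [hfilt] at hsplit
  have : ∑ g ∈ (patt V S).filter (fun g => HasCycle S g), w wt S g + A V wt S = W V wt S := hsplit
  rw [hW, hA] at this
  linarith
end CycleAux

namespace CycleAux

lemma hasCycle_congr {S : Finset ℕ} {f f' : ℕ → ℕ} (h : ∀ i ∈ S, f i = f' i) :
    HasCycle S f → HasCycle S f' := by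
  rintro ⟨k, a, hk, haS, hstep, hlast⟩
  exact ⟨k, a, hk, haS, fun i hik => by rw [← h (a i) (haS i (by omega))]; exact hstep i hik,
    by rw [← h (a (k-1)) (haS (k-1) (by omega))]; exact hlast⟩

end CycleAux


end

open CycleAux ProbabilityTheory
open scoped Classical

/-- Let `S` be a finite nonempty set of positive integers, `π` a probability
distribution on `S`, and `p i ∈ [0,1]` for each `i ∈ S`.  Let `F` be a random
`S`-map whose values are independent, with `F i` distributed according to `π` with
probability `p i` and equal to `0` otherwise.  Then the probability that `F` has a
cycle equals the expected number of fixed points of `F`, i.e. the expected number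
of `i ∈ S` with `F i = i`. -/
theorem cycle_prob_eq_expected_fixed_points
    (S : Finset ℕ) (hS : S.Nonempty) (hpos : ∀ i ∈ S, 0 < i)
    (π : ℕ → ℝ) (hπ0 : ∀ i ∈ S, 0 ≤ π i) (hπ1 : ∑ i ∈ S, π i = 1)
    (p : ℕ → ℝ) (hp : ∀ i ∈ S, 0 ≤ p i ∧ p i ≤ 1)
    {Ω : Type*} [MeasurableSpace Ω] (μ : Measure Ω) [IsProbabilityMeasure μ]
    (F : Ω → ℕ → ℕ)
    (hSmap : ∀ ω, ∀ i ∈ S, F ω i ∈ S ∨ F ω i = 0)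
    (hmeas : ∀ i ∈ S, Measurable fun ω => F ω i)
    (hindep : ProbabilityTheory.iIndepFun
      (fun (i : {i // i ∈ S}) ω => F ω i.val) μ)
    (hzero : ∀ i ∈ S, (μ {ω | F ω i = 0}).toReal = 1 - p i)
    (hval : ∀ i ∈ S, ∀ j ∈ S, (μ {ω | F ω i = j}).toReal = p i * π j) :
    (μ {ω | HasCycle S (F ω)}).toReal =
      ∫ ω, ((S.filter fun i => F ω i = i).card : ℝ) ∂μ := by
  have h0S : (0:ℕ) ∉ S := fun h => absurd (hpos 0 h) (lt_irrefl 0)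
  set V : Finset ℕ := insert 0 S with hV
  have hSV : S ⊆ V := Finset.subset_insert 0 S
  set wt : ℕ → ℕ → ℝ := fun i j => if j = 0 then 1 - p i else p i * π j with hwt
  have hprod : ∀ i ∈ S, ∀ j ∈ S, wt i j = p i * π j := by
    intro i hi j hj
    have : j ≠ 0 := fun h => h0S (h ▸ hj)
    simp [hwt, this]
  have hnorm : ∀ i ∈ S, ∑ v ∈ V, wt i v = 1 := by
    intro i hi
    rw [hV, Finset.sum_insert h0S]
    have : ∑ v ∈ S, wt i v = p i := by
      rw [Finset.sum_congr rfl (fun j hj => hprod i hi j hj), ← Finset.mul_sum, hπ1, mul_one]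
    rw [this]
    simp [hwt]
  -- the RHS
  have hRHS : ∫ ω, ((S.filter fun i => F ω i = i).card : ℝ) ∂μ = ∑ i ∈ S, p i * π i := by
    have hcard : ∀ ω, ((S.filter fun i => F ω i = i).card : ℝ)
        = ∑ i ∈ S, Set.indicator {ω' | F ω' i = i} (fun _ => (1:ℝ)) ω := by
      intro ω
      rw [Finset.card_filter]
      push_cast
      refine Finset.sum_congr rfl (fun i _ => ?_)
      by_cases h : F ω i = i <;> simp [Set.indicator_apply, h]
    have hmeasset : ∀ i ∈ S, MeasurableSet {ω' | F ω' i = i} := by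
      intro i hi
      exact (hmeas i hi) (measurableSet_singleton i)
    calc ∫ ω, ((S.filter fun i => F ω i = i).card : ℝ) ∂μ
        = ∫ ω, ∑ i ∈ S, Set.indicator {ω' | F ω' i = i} (fun _ => (1:ℝ)) ω ∂μ := by
          exact integral_congr_ae (Filter.Eventually.of_forall hcard)
      _ = ∑ i ∈ S, ∫ ω, Set.indicator {ω' | F ω' i = i} (fun _ => (1:ℝ)) ω ∂μ := by
          refine integral_finset_sum S (fun i hi => ?_)
          exact (integrable_const (1:ℝ)).indicator (hmeasset i hi)
      _ = ∑ i ∈ S, p i * π i := by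
          refine Finset.sum_congr rfl (fun i hi => ?_)
          rw [integral_indicator_const (1:ℝ) (hmeasset i hi)]
          simp [measureReal_def, hval i hi i hi]
  rw [hRHS]
  -- the LHS: decompose the event over cyclic patterns
  set cycF : Finset (ℕ → ℕ) := (patt V S).filter (fun g => HasCycle S g) with hcycF
  set Eg : (ℕ → ℕ) → Set Ω := fun g => {ω | ∀ i ∈ S, F ω i = g i} with hEg
  have hEgm : ∀ g, MeasurableSet (Eg g) := by
    intro g
    have : Eg g = ⋂ i ∈ S, (fun ω => F ω i) ⁻¹' {g i} := by
      ext ω; simp [hEg, Set.mem_iInter]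
    rw [this]
    exact Finset.measurableSet_biInter S (fun i hi => (hmeas i hi) (measurableSet_singleton _))
  have hevent : {ω | HasCycle S (F ω)} = ⋃ g ∈ cycF, Eg g := by
    ext ω
    simp only [Set.mem_setOf_eq, Set.mem_iUnion, hcycF, Finset.mem_filter]
    constructor
    · intro hcyc
      refine ⟨restr S (F ω), ⟨⟨mem_patt.2 ⟨fun n hn => by simp [restr, hn],
        fun n hn => ?_⟩, ?_⟩, fun i hi => by simp [restr, hi]⟩⟩
      · simp only [restr, hn, if_pos]
        rcases hSmap ω n hn with h | h
        · exact hSV h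
        · rw [h]; exact Finset.mem_insert_self 0 S
      · exact hasCycle_congr (fun i hi => by simp [restr, hi]) hcyc
    · rintro ⟨g, ⟨⟨hgp, hgc⟩, hgeq⟩⟩
      exact hasCycle_congr (fun i hi => (hgeq i hi).symm) hgc
  have hdisj : (cycF : Set (ℕ → ℕ)).PairwiseDisjoint Eg := by
    intro g hg g' hg' hne
    simp only [Finset.coe_filter, Set.mem_setOf_eq, hcycF] at hg hg'
    refine Set.disjoint_left.2 (fun ω hw hw' => hne ?_)
    funext n
    by_cases hn : n ∈ S
    · rw [← hw n hn, ← hw' n hn]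
    · rw [patt_zero_off hg.1 hn, patt_zero_off hg'.1 hn]
  have hmu : μ {ω | HasCycle S (F ω)} = ∑ g ∈ cycF, μ (Eg g) := by
    rw [hevent]
    exact measure_biUnion_finset hdisj (fun g _ => hEgm g)
  -- independence: each event factors
  have hfact : ∀ g ∈ cycF, (μ (Eg g)).toReal = w wt S g := by
    intro g hg
    obtain ⟨hgp, _⟩ := Finset.mem_filter.1 hg
    have hiint : Eg g = ⋂ i : {i // i ∈ S}, (fun ω => F ω i.1) ⁻¹' {g i.1} := by
      ext ω
      simp [hEg, Set.mem_iInter, Subtype.forall]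
    have hfac : μ (Eg g) = ∏ i : {i // i ∈ S}, μ ((fun ω => F ω i.1) ⁻¹' {g i.1}) := by
      rw [hiint]
      refine hindep.meas_iInter (fun i => ?_)
      exact ⟨{g i.1}, measurableSet_singleton _, rfl⟩
    rw [hfac, ENNReal.toReal_prod, w]
    rw [← Finset.prod_coe_sort S (fun i => wt i (g i))]
    refine Finset.prod_congr rfl (fun i _ => ?_)
    have hgi : g i.1 ∈ V := (mem_patt.1 hgp).2 i.1 i.2
    by_cases h0 : g i.1 = 0
    · have : (fun ω => F ω i.1) ⁻¹' {g i.1} = {ω | F ω i.1 = 0} := by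
        ext ω; simp [h0]
      rw [this, hzero i.1 i.2]
      simp [hwt, h0]
    · have hgiS : g i.1 ∈ S := by
        rcases Finset.mem_insert.1 (hV ▸ hgi) with h | h
        · exact absurd h h0
        · exact h
      have : (fun ω => F ω i.1) ⁻¹' {g i.1} = {ω | F ω i.1 = g i.1} := rfl
      rw [this, hval i.1 i.2 (g i.1) hgiS]
      simp [hwt, h0]
  have : (μ {ω | HasCycle S (F ω)}).toReal = ∑ g ∈ cycF, w wt S g := by
    rw [hmu, ENNReal.toReal_sum (fun g _ => measure_ne_top μ _)]
    exact Finset.sum_congr rfl hfact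
  rw [this, hcycF]
  exact cyc_sum h0S hSV hnorm hprod
end

section
/- Let S be a finite nonempty set of positive integers with |S| = n and let G ⊆ S with |G| = k. The number of S-maps f such that f(i) ∈ S for all i ∈ G, f(i) = 0 for all i ∈ S \ G, and f is cycle-free, equals (n−k)·n^{k−1} when k ≥ 1, and equals 1 when k = 0. Equivalently, a random S-map f with f(i) = 0 for i ∉ G and f(i) uniform and independent on S for i ∈ G has a cycle with probability k/n. -/
open MeasureTheory

namespace CFAux

open Finset
open scoped Classical

noncomputable section

variable {f g : ℕ → ℕ} {A G T S : Finset ℕ}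

lemma iter_mem_of_closed (hcl : ∀ x ∈ A, f x ∈ A) {x : ℕ} (hx : x ∈ A) :
    ∀ i, f^[i] x ∈ A := by
  intro i; induction i with
  | zero => simpa
  | succ i ih => rw [Function.iterate_succ_apply']; exact hcl _ ih

lemma iter_eq_of_eqOn (hfg : ∀ y ∈ A, f y = g y) {x : ℕ}
    (hx : ∀ i, f^[i] x ∈ A) : ∀ m, f^[m] x = g^[m] x := by
  intro m; induction m with
  | zero => rfl
  | succ m ih =>
      rw [Function.iterate_succ_apply', Function.iterate_succ_apply', ih,
        ← ih, hfg _ (hx m), ih]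

lemma iter_stuck (hsupp : ∀ i ∉ A, f i = 0) (h0 : (0:ℕ) ∉ A) {y : ℕ} (hy : y ∉ A) :
    ∀ m, f^[m+1] y = 0 := by
  intro m; induction m with
  | zero => simpa using hsupp _ hy
  | succ m ih => rw [Function.iterate_succ_apply', ih]; exact hsupp _ h0

lemma periodic_iter_mem (hsupp : ∀ i ∉ A, f i = 0) (h0 : (0:ℕ) ∉ A) {x m : ℕ}
    (hx : x ∈ A) (hm : 0 < m) (hper : f^[m] x = x) : ∀ i, f^[i] x ∈ A := by
  intro i
  by_contra hiA
  have hfix : ∀ t, f^[m*t] x = x := by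
    intro t; rw [Function.iterate_mul]; exact Function.iterate_fixed hper t
  have h1 : i + 1 ≤ m * (i+1) := Nat.le_mul_of_pos_left _ hm
  have h2 : m * (i+1) = (m*(i+1) - (i+1)) + 1 + i := by omega
  have h3 : f^[m*(i+1)] x = 0 := by
    rw [h2, Function.iterate_add_apply]
    exact iter_stuck hsupp h0 hiA _
  rw [hfix (i+1)] at h3
  exact h0 (h3 ▸ hx)

/-- The set of periodic points in `G`. -/
def core (G : Finset ℕ) (f : ℕ → ℕ) : Finset ℕ :=
  G.filter (fun x => ∃ m, 0 < m ∧ f^[m] x = x)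

lemma mem_core {x : ℕ} : x ∈ core G f ↔ x ∈ G ∧ ∃ m, 0 < m ∧ f^[m] x = x := by
  simp [core]

lemma core_subset : core G f ⊆ G := filter_subset _ _

lemma core_mapsTo (hsupp : ∀ i ∉ G, f i = 0) (h0 : (0:ℕ) ∉ G) :
    ∀ x ∈ core G f, f x ∈ core G f := by
  intro x hx
  obtain ⟨hxG, m, hm, hper⟩ := mem_core.1 hx
  refine mem_core.2 ⟨?_, m, hm, ?_⟩
  · have := periodic_iter_mem hsupp h0 hxG hm hper 1
    simpa using this
  · rw [← Function.iterate_succ_apply, Function.iterate_succ_apply', hper]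

lemma core_injOn (hsupp : ∀ i ∉ G, f i = 0) {x y : ℕ}
    (hx : x ∈ core G f) (hy : y ∈ core G f) (hxy : f x = f y) : x = y := by
  obtain ⟨hxG, m, hm, hperx⟩ := mem_core.1 hx
  obtain ⟨hyG, m', hm', hpery⟩ := mem_core.1 hy
  have hfixx : f^[m * m'] x = x := by
    rw [Function.iterate_mul]; exact Function.iterate_fixed hperx m'
  have hfixy : f^[m * m'] y = y := by
    rw [Nat.mul_comm, Function.iterate_mul]; exact Function.iterate_fixed hpery m
  have hmm : m * m' = (m * m' - 1) + 1 := by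
    have : 0 < m * m' := Nat.mul_pos hm hm'
    omega
  have e1 : f^[m*m'] x = f^[m*m'-1] (f x) := by
    conv_lhs => rw [hmm]
    rw [Function.iterate_succ_apply]
  have e2 : f^[m*m'] y = f^[m*m'-1] (f y) := by
    conv_lhs => rw [hmm]
    rw [Function.iterate_succ_apply]
  rw [← hfixx, ← hfixy, e1, e2, hxy]

lemma core_surjOn {x : ℕ} (hsupp : ∀ i ∉ G, f i = 0) (h0 : (0:ℕ) ∉ G)
    (hx : x ∈ core G f) : ∃ y ∈ core G f, f y = x := by
  obtain ⟨hxG, m, hm, hper⟩ := mem_core.1 hx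
  refine ⟨f^[m-1] x, mem_core.2 ⟨periodic_iter_mem hsupp h0 hxG hm hper _, m, hm, ?_⟩, ?_⟩
  · rw [← Function.iterate_add_apply, Nat.add_comm, Function.iterate_add_apply, hper]
  · have : m - 1 + 1 = m := Nat.succ_pred_eq_of_pos hm
    calc f (f^[m-1] x) = f^[m-1+1] x := (Function.iterate_succ_apply' f (m-1) x).symm
      _ = x := by rw [this, hper]

/-- maps with `f i ∈ S` on `G` and `0` elsewhere -/
def FunSet (S G : Finset ℕ) : Finset (ℕ → ℕ) :=
  (G.pi fun _ => S).image (fun p i => if h : i ∈ G then p i h else 0)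

lemma mem_FunSet {f : ℕ → ℕ} :
    f ∈ FunSet S G ↔ (∀ i ∈ G, f i ∈ S) ∧ ∀ i ∉ G, f i = 0 := by
  constructor
  · rintro hf
    obtain ⟨p, hp, rfl⟩ := Finset.mem_image.1 hf
    rw [Finset.mem_pi] at hp
    constructor
    · intro i hi; simp only [dif_pos hi]; exact hp i hi
    · intro i hi; simp only [dif_neg hi]
  · rintro ⟨h1, h2⟩
    refine Finset.mem_image.2 ⟨fun i _ => f i, Finset.mem_pi.2 fun i hi => h1 i hi, ?_⟩
    funext i
    by_cases hi : i ∈ G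
    · simp [dif_pos hi]
    · simp [dif_neg hi, h2 i hi]

lemma card_FunSet : (FunSet S G).card = S.card ^ G.card := by
  rw [FunSet, Finset.card_image_of_injOn, Finset.card_pi, Finset.prod_const]
  intro p hp q hq hpq
  rw [Finset.mem_coe, Finset.mem_pi] at hp hq
  funext i hi
  have := congrFun hpq i
  simpa [dif_pos hi] using this

/-- periodic point inside G -/
def Pcyc (G : Finset ℕ) (f : ℕ → ℕ) : Prop := ∃ x ∈ G, ∃ m, 0 < m ∧ f^[m] x = x

lemma pcyc_iff_core_nonempty : Pcyc G f ↔ (core G f).Nonempty := by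
  constructor
  · rintro ⟨x, hx, m, hm⟩; exact ⟨x, mem_core.2 ⟨hx, m, hm⟩⟩
  · rintro ⟨x, hx⟩; obtain ⟨h1, m, hm⟩ := mem_core.1 hx; exact ⟨x, h1, m, hm⟩

/-- every point of a finset mapped injectively into itself is periodic -/
lemma periodic_of_bijOn (hmaps : ∀ x ∈ T, f x ∈ T) (hinj : Set.InjOn f ↑T)
    {x : ℕ} (hx : x ∈ T) : ∃ m, 0 < m ∧ f^[m] x = x := by
  have hiter : ∀ i, f^[i] x ∈ T := iter_mem_of_closed hmaps hx
  obtain ⟨i, hi, j, hj, hij, heq⟩ :=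
    Finset.exists_ne_map_eq_of_card_lt_of_maps_to
      (s := Finset.range (T.card + 1)) (t := T) (by simp) (fun i _ => hiter i)
  wlog hlt : i < j generalizing i j
  · exact this j hj i hi hij.symm heq.symm (by omega)
  have hcancel : ∀ a b : ℕ, ∀ d : ℕ, f^[d] (f^[a] x) = f^[d] (f^[b] x) →
      f^[a] x = f^[b] x := by
    intro a b d hd
    induction d with
    | zero => simpa using hd
    | succ d ih =>
        apply ih
        rw [Function.iterate_succ_apply', Function.iterate_succ_apply'] at hd
        refine hinj ?_ ?_ hd
        · rw [← Function.iterate_add_apply]; exact hiter _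
        · rw [← Function.iterate_add_apply]; exact hiter _
  refine ⟨j - i, by omega, ?_⟩
  have : f^[i] (f^[j-i] x) = f^[i] (f^[0] x) := by
    rw [← Function.iterate_add_apply]
    have : i + (j - i) = j := by omega
    rw [this]
    simpa using heq.symm
  have := hcancel (j-i) 0 i this
  simpa using this

/-- equivalence of HasCycle with existence of a periodic point in G -/
lemma hasCycle_iff (h0S : (0:ℕ) ∉ S) (hGS : G ⊆ S)
    (h1 : ∀ i ∈ G, f i ∈ S) (h2 : ∀ i ∉ G, f i = 0) :
    HasCycle S f ↔ Pcyc G f := by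
  have h0G : (0:ℕ) ∉ G := fun h => h0S (hGS h)
  constructor
  · rintro ⟨k, a, hk, haS, hstep, hlast⟩
    have haG : ∀ i < k, a i ∈ G := by
      intro i hi
      by_contra hiG
      have : f (a i) = 0 := h2 _ hiG
      rcases Nat.lt_or_ge (i+1) k with h | h
      · rw [hstep i h] at this
        exact h0S (this ▸ haS (i+1) h)
      · have hik : i = k - 1 := by omega
        rw [hik, hlast] at this
        exact h0S (this ▸ haS 0 hk)
    have hiter : ∀ i < k, f^[i] (a 0) = a i := by
      intro i hi
      induction i with
      | zero => rfl
      | succ i ih =>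
          rw [Function.iterate_succ_apply', ih (by omega), hstep i hi]
    refine ⟨a 0, haG 0 hk, k, hk, ?_⟩
    have hk1 : k - 1 + 1 = k := Nat.succ_pred_eq_of_pos hk
    calc f^[k] (a 0) = f^[k-1+1] (a 0) := by rw [hk1]
      _ = f (f^[k-1] (a 0)) := Function.iterate_succ_apply' f _ _
      _ = f (a (k-1)) := by rw [hiter (k-1) (by omega)]
      _ = a 0 := hlast
  · rintro ⟨x, hxG, m, hm, hper⟩
    have hiterG : ∀ i, f^[i] x ∈ G := periodic_iter_mem h2 h0G hxG hm hper
    refine ⟨m, fun i => f^[i] x, hm, fun i _ => hGS (hiterG i), fun i _ => ?_, ?_⟩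
    · exact (Function.iterate_succ_apply' f i x).symm
    · have hk1 : m - 1 + 1 = m := Nat.succ_pred_eq_of_pos hm
      calc f (f^[m-1] x) = f^[m-1+1] x := (Function.iterate_succ_apply' f _ _).symm
        _ = f^[0] x := by rw [hk1, hper]; rfl

def trunc (A : Finset ℕ) (f : ℕ → ℕ) : ℕ → ℕ := fun i => if i ∈ A then f i else 0

lemma trunc_supp {A : Finset ℕ} {i : ℕ} (hi : i ∉ A) : trunc A f i = 0 := if_neg hi

lemma trunc_mem_FunSet (hf : f ∈ FunSet S G) :
    trunc (G \ T) f ∈ FunSet S (G \ T) := by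
  rw [mem_FunSet] at hf ⊢
  refine ⟨fun i hi => ?_, fun i hi => trunc_supp hi⟩
  rw [trunc, if_pos hi]
  exact hf.1 i (Finset.mem_sdiff.1 hi).1

lemma trunc_no_pcyc (h0G : (0:ℕ) ∉ G) (hf : f ∈ FunSet S G) (hcore : core G f = T) :
    ¬ Pcyc (G \ T) (trunc (G \ T) f) := by
  rintro ⟨x, hx, m, hm, hper⟩
  set tf := trunc (G \ T) f with htf
  have hsupp : ∀ i ∉ G \ T, tf i = 0 := fun i hi => trunc_supp hi
  have h0 : (0:ℕ) ∉ G \ T := fun h => h0G (Finset.mem_sdiff.1 h).1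
  have hiter : ∀ i, tf^[i] x ∈ G \ T := periodic_iter_mem hsupp h0 hx hm hper
  have heq : ∀ y ∈ G \ T, tf y = f y := fun y hy => if_pos hy
  have : f^[m] x = x := by rw [← iter_eq_of_eqOn heq hiter m, hper]
  have hxcore : x ∈ core G f := mem_core.2 ⟨(Finset.mem_sdiff.1 hx).1, m, hm, this⟩
  rw [hcore] at hxcore
  exact (Finset.mem_sdiff.1 hx).2 hxcore

def pglue (T G : Finset ℕ) (σ : Equiv.Perm {x // x ∈ T}) (h : ℕ → ℕ) : ℕ → ℕ :=
  fun i => if hi : i ∈ T then (σ ⟨i, hi⟩ : ℕ) else if i ∈ G then h i else 0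

lemma pglue_mem_T {σ : Equiv.Perm {x // x ∈ T}} {h : ℕ → ℕ} {i : ℕ} (hi : i ∈ T) :
    pglue T G σ h i ∈ T := by
  rw [pglue, dif_pos hi]; exact (σ ⟨i, hi⟩).2

lemma pglue_eq_T {σ : Equiv.Perm {x // x ∈ T}} {h : ℕ → ℕ} {i : ℕ} (hi : i ∈ T) :
    pglue T G σ h i = (σ ⟨i, hi⟩ : ℕ) := dif_pos hi

lemma pglue_injOn_T {σ : Equiv.Perm {x // x ∈ T}} {h : ℕ → ℕ} :
    Set.InjOn (pglue T G σ h) ↑T := by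
  intro a ha b hb hab
  rw [Finset.mem_coe] at ha hb
  rw [pglue_eq_T ha, pglue_eq_T hb] at hab
  have := σ.injective (Subtype.ext hab)
  exact congrArg Subtype.val this

lemma pglue_mem_FunSet (hGS : G ⊆ S) (hT : T ⊆ G) {σ : Equiv.Perm {x // x ∈ T}}
    {h : ℕ → ℕ} (hh : h ∈ FunSet S (G \ T)) : pglue T G σ h ∈ FunSet S G := by
  rw [mem_FunSet] at hh ⊢
  constructor
  · intro i hi
    by_cases hiT : i ∈ T
    · exact hGS (hT (pglue_mem_T hiT))
    · rw [pglue, dif_neg hiT, if_pos hi]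
      exact hh.1 i (Finset.mem_sdiff.2 ⟨hi, hiT⟩)
  · intro i hi
    rw [pglue, dif_neg (fun hiT => hi (hT hiT)), if_neg hi]

lemma core_pglue (h0G : (0:ℕ) ∉ G) (hT : T ⊆ G) {σ : Equiv.Perm {x // x ∈ T}}
    {h : ℕ → ℕ} (hh : h ∈ FunSet S (G \ T)) (hnc : ¬ Pcyc (G \ T) h) :
    core G (pglue T G σ h) = T := by
  set f := pglue T G σ h with hf
  ext x
  constructor
  · intro hx
    obtain ⟨hxG, m, hm, hper⟩ := mem_core.1 hx
    by_contra hxT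
    have hxGT : x ∈ G \ T := Finset.mem_sdiff.2 ⟨hxG, hxT⟩
    have hsupp : ∀ i ∉ G, f i = 0 := by
      intro i hi
      rw [hf, pglue, dif_neg (fun hiT => hi (hT hiT)), if_neg hi]
    have hiterG : ∀ i, f^[i] x ∈ G := periodic_iter_mem hsupp h0G hxG hm hper
    have hiterT : ∀ i, f^[i] x ∉ T := by
      intro i hi
      have hclosed : ∀ d, f^[d] (f^[i] x) ∈ T :=
        iter_mem_of_closed (fun y hy => pglue_mem_T hy) hi
      have h1 : f^[m * (i+1)] x = x := by
        rw [Function.iterate_mul]; exact Function.iterate_fixed hper _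
      have h2 : m * (i + 1) = (m * (i+1) - i) + i := by
        have : i + 1 ≤ m * (i+1) := Nat.le_mul_of_pos_left _ hm
        omega
      have := hclosed (m * (i+1) - i)
      rw [← Function.iterate_add_apply, ← h2, h1] at this
      exact hxT this
    have hiterGT : ∀ i, f^[i] x ∈ G \ T :=
      fun i => Finset.mem_sdiff.2 ⟨hiterG i, hiterT i⟩
    have heq : ∀ y ∈ G \ T, f y = h y := by
      intro y hy
      obtain ⟨hyG, hyT⟩ := Finset.mem_sdiff.1 hy
      rw [hf, pglue, dif_neg hyT, if_pos hyG]
    have : h^[m] x = x := by rw [← iter_eq_of_eqOn heq hiterGT m, hper]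
    exact absurd ⟨x, hxGT, m, hm, this⟩ hnc
  · intro hxT
    refine mem_core.2 ⟨hT hxT, ?_⟩
    exact periodic_of_bijOn (fun y hy => pglue_mem_T hy) pglue_injOn_T hxT

noncomputable def permOf (T : Finset ℕ) (f : ℕ → ℕ) : Equiv.Perm {x // x ∈ T} :=
  if h : (∀ x ∈ T, f x ∈ T) ∧ Set.InjOn f ↑T then
    Equiv.ofBijective (fun x => ⟨f x, h.1 x x.2⟩)
      ((Finite.injective_iff_bijective).1 (fun a b hab =>
        Subtype.ext (h.2 a.2 b.2 (congrArg Subtype.val hab))))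
  else Equiv.refl _

lemma permOf_apply {f : ℕ → ℕ} (h : (∀ x ∈ T, f x ∈ T) ∧ Set.InjOn f ↑T)
    (x : {x // x ∈ T}) : (permOf T f x : ℕ) = f x := by
  rw [permOf, dif_pos h]; rfl

lemma fiber_card (h0G : (0:ℕ) ∉ G) (hGS : G ⊆ S) (hT : T ⊆ G) :
    ((FunSet S G).filter fun f => core G f = T).card
      = Nat.factorial T.card * ((FunSet S (G \ T)).filter fun h => ¬ Pcyc (G \ T) h).card := by
  have hcard : Nat.factorial T.card * ((FunSet S (G \ T)).filter fun h => ¬ Pcyc (G \ T) h).card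
      = ((Finset.univ : Finset (Equiv.Perm {x // x ∈ T})) ×ˢ
          ((FunSet S (G \ T)).filter fun h => ¬ Pcyc (G \ T) h)).card := by
    rw [Finset.card_product, Finset.card_univ, Fintype.card_perm, Fintype.card_coe]
  rw [hcard]
  apply Finset.card_bij' (fun f _ => (permOf T f, trunc (G \ T) f))
    (fun p _ => pglue T G p.1 p.2)
  · -- maps to
    intro f hf
    rw [Finset.mem_filter] at hf
    obtain ⟨hfF, hcore⟩ := hf
    rw [Finset.mem_product]
    refine ⟨Finset.mem_univ _, Finset.mem_filter.2 ⟨trunc_mem_FunSet hfF, ?_⟩⟩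
    exact trunc_no_pcyc h0G hfF hcore
  · -- maps back
    intro p hp
    rw [Finset.mem_product, Finset.mem_filter] at hp
    obtain ⟨-, hpF, hpnc⟩ := hp
    exact Finset.mem_filter.2 ⟨pglue_mem_FunSet hGS hT hpF,
      core_pglue h0G hT hpF hpnc⟩
  · -- left inverse : pglue (permOf f) (trunc f) = f
    intro f hf
    rw [Finset.mem_filter] at hf
    obtain ⟨hfF, hcore⟩ := hf
    have hbij : (∀ x ∈ T, f x ∈ T) ∧ Set.InjOn f ↑T := by
      subst hcore
      refine ⟨core_mapsTo (mem_FunSet.1 hfF).2 h0G, ?_⟩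
      intro a ha b hb hab
      exact core_injOn (mem_FunSet.1 hfF).2 ha hb hab
    funext i
    by_cases hiT : i ∈ T
    · rw [pglue, dif_pos hiT, permOf_apply hbij]
    · by_cases hiG : i ∈ G
      · have hmem : i ∈ G \ T := Finset.mem_sdiff.2 ⟨hiG, hiT⟩
        simp only [pglue, trunc, dif_neg hiT, if_pos hiG, if_pos hmem]
      · rw [pglue, dif_neg hiT, if_neg hiG, (mem_FunSet.1 hfF).2 i hiG]
  · -- right inverse
    intro p hp
    rw [Finset.mem_product, Finset.mem_filter] at hp
    obtain ⟨-, hpF, hpnc⟩ := hp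
    have hbij : (∀ x ∈ T, pglue T G p.1 p.2 x ∈ T) ∧ Set.InjOn (pglue T G p.1 p.2) ↑T :=
      ⟨fun x hx => pglue_mem_T hx, pglue_injOn_T⟩
    have h1 : permOf T (pglue T G p.1 p.2) = p.1 := by
      apply Equiv.ext
      intro x
      apply Subtype.ext
      rw [permOf_apply hbij, pglue_eq_T x.2]
    have h2 : trunc (G \ T) (pglue T G p.1 p.2) = p.2 := by
      funext i
      by_cases hi : i ∈ G \ T
      · obtain ⟨hiG, hiT⟩ := Finset.mem_sdiff.1 hi
        rw [trunc, if_pos hi, pglue, dif_neg hiT, if_pos hiG]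
      · rw [trunc, if_neg hi, (mem_FunSet.1 hpF).2 i hi]
    rw [h1, h2]

lemma key_identity (h0G : (0:ℕ) ∉ G) (hGS : G ⊆ S) :
    (FunSet S G).card = ∑ T ∈ G.powerset,
      Nat.factorial T.card * ((FunSet S (G \ T)).filter fun h => ¬ Pcyc (G \ T) h).card := by
  rw [Finset.card_eq_sum_card_fiberwise
    (f := core G) (t := G.powerset)
    (fun f _ => Finset.mem_powerset.2 core_subset)]
  exact Finset.sum_congr rfl fun T hT =>
    fiber_card h0G hGS (Finset.mem_powerset.1 hT)

def Dv (n m : ℕ) : ℕ := if m = 0 then 1 else (n - m) * n ^ (m - 1)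

lemma sum_D {n k : ℕ} (hk : k ≤ n) :
    ∑ j ∈ Finset.range (k+1), k.descFactorial j * Dv n (k - j) = n ^ k := by
  induction k with
  | zero => simp [Dv]
  | succ k ih =>
      rw [Finset.sum_range_succ']
      have hstep : ∀ j ∈ Finset.range (k+1),
          (k+1).descFactorial (j+1) * Dv n (k + 1 - (j+1))
            = (k+1) * (k.descFactorial j * Dv n (k - j)) := by
        intro j hj
        rw [Nat.succ_descFactorial_succ]
        have : k + 1 - (j + 1) = k - j := by omega
        rw [this, Nat.mul_assoc]
      rw [Finset.sum_congr rfl hstep, ← Finset.mul_sum, ih (by omega)]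
      simp only [Nat.descFactorial_zero, Nat.sub_zero, Nat.one_mul]
      rw [Dv, if_neg (Nat.succ_ne_zero k)]
      have h1 : k + 1 - 1 = k := by omega
      rw [h1, Nat.add_comm ((k+1) * n^k), ← Nat.add_mul]
      rw [Nat.sub_add_cancel hk, pow_succ, Nat.mul_comm]

lemma Ncf_empty : ((FunSet S (∅ : Finset ℕ)).filter fun f => ¬ Pcyc ∅ f).card = 1 := by
  rw [Finset.filter_true_of_mem, card_FunSet]
  · simp
  · rintro f - ⟨x, hx, -⟩
    exact absurd hx (Finset.notMem_empty x)

lemma Ncf_eq (h0S : (0:ℕ) ∉ S) :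
    ∀ N (G : Finset ℕ), G.card ≤ N → G ⊆ S →
      ((FunSet S G).filter fun f => ¬ Pcyc G f).card = Dv S.card G.card := by
  intro N
  induction N with
  | zero =>
      intro G hG hGS
      rw [Finset.card_eq_zero.1 (Nat.le_zero.1 hG)]
      rw [Ncf_empty]
      simp [Dv]
  | succ N ih =>
      intro G hG hGS
      have h0G : (0:ℕ) ∉ G := fun h => h0S (hGS h)
      have hkey := key_identity h0G hGS
      rw [card_FunSet] at hkey
      rw [← Finset.add_sum_erase _ _ (Finset.empty_mem_powerset G)] at hkey
      simp only [Finset.card_empty, Nat.factorial_zero, Finset.sdiff_empty, Nat.one_mul] at hkey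
      have hrepl : ∀ T ∈ (G.powerset).erase ∅,
          Nat.factorial T.card * ((FunSet S (G \ T)).filter fun h => ¬ Pcyc (G \ T) h).card
            = Nat.factorial T.card * Dv S.card (G.card - T.card) := by
        intro T hT
        obtain ⟨hTne, hTG⟩ := Finset.mem_erase.1 hT
        have hTG' : T ⊆ G := Finset.mem_powerset.1 hTG
        have hTpos : 0 < T.card := Finset.card_pos.2 (Finset.nonempty_iff_ne_empty.2 hTne)
        have hle : (G \ T).card ≤ N := by
          rw [Finset.card_sdiff_of_subset hTG']
          omega
        rw [ih (G \ T) hle (fun x hx => hGS (Finset.mem_sdiff.1 hx).1),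
          Finset.card_sdiff_of_subset hTG']
      rw [Finset.sum_congr rfl hrepl] at hkey
      -- Now compute the full D-sum
      have hfull : ∑ T ∈ G.powerset, Nat.factorial T.card * Dv S.card (G.card - T.card)
          = S.card ^ G.card := by
        rw [Finset.sum_powerset_apply_card (fun c => Nat.factorial c * Dv S.card (G.card - c))]
        have hconv : ∀ j ∈ Finset.range (G.card + 1),
            G.card.choose j • (Nat.factorial j * Dv S.card (G.card - j))
              = G.card.descFactorial j * Dv S.card (G.card - j) := by
          intro j hj
          rw [smul_eq_mul, Nat.descFactorial_eq_factorial_mul_choose, ← Nat.mul_assoc,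
            Nat.mul_comm (G.card.choose j)]
        rw [Finset.sum_congr rfl hconv, sum_D (Finset.card_le_card hGS)]
      rw [← Finset.add_sum_erase _ (fun T => Nat.factorial T.card * Dv S.card (G.card - T.card))
        (Finset.empty_mem_powerset G)] at hfull
      simp only [Finset.card_empty, Nat.factorial_zero, Nat.sub_zero, Nat.one_mul] at hfull
      omega

variable {Ω : Type*} [MeasurableSpace Ω]

/-- cylinder event -/
def Ev (G : Finset ℕ) (F : Ω → ℕ → ℕ) (f : ℕ → ℕ) : Set Ω :=
  ⋂ i ∈ G, (fun ω => F ω i) ⁻¹' {f i}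

omit [MeasurableSpace Ω] in
lemma mem_Ev {F : Ω → ℕ → ℕ} {f : ℕ → ℕ} {ω : Ω} :
    ω ∈ Ev G F f ↔ ∀ i ∈ G, F ω i = f i := by
  simp [Ev]

lemma Ev_measurable {F : Ω → ℕ → ℕ} (hmeas : ∀ i ∈ G, Measurable fun ω => F ω i)
    (f : ℕ → ℕ) : MeasurableSet (Ev G F f) :=
  MeasurableSet.biInter (Set.to_countable _)
    (fun i hi => (hmeas i hi) (measurableSet_singleton _))

lemma Ev_measure (μ : Measure Ω) [IsProbabilityMeasure μ] {F : Ω → ℕ → ℕ}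
    (hindep : ProbabilityTheory.iIndepFun
      (fun (i : {i // i ∈ G}) ω => F ω i.val) μ)
    (hunif : ∀ i ∈ G, ∀ j ∈ S, (μ {ω | F ω i = j}).toReal = 1 / S.card)
    {f : ℕ → ℕ} (hf : ∀ i ∈ G, f i ∈ S) :
    μ (Ev G F f) = ENNReal.ofReal (1 / S.card) ^ G.card := by
  have hEv : Ev G F f = ⋂ i ∈ (Finset.univ : Finset {i // i ∈ G}),
      (fun ω => F ω i.val) ⁻¹' {f i.val} := by
    ext ω
    simp only [mem_Ev, Set.mem_iInter, Set.mem_preimage, Set.mem_singleton_iff]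
    constructor
    · intro h i _; exact h i.val i.2
    · intro h i hi; exact h ⟨i, hi⟩ (Finset.mem_univ _)
  rw [hEv, hindep.measure_inter_preimage_eq_mul Finset.univ
    (fun i _ => measurableSet_singleton _)]
  have hterm : ∀ i : {i // i ∈ G},
      μ ((fun ω => F ω i.val) ⁻¹' {f i.val}) = ENNReal.ofReal (1 / S.card) := by
    intro i
    have h1 : ((fun ω => F ω i.val) ⁻¹' {f i.val}) = {ω | F ω i.val = f i.val} := rfl
    rw [h1, ← ENNReal.ofReal_toReal (measure_ne_top μ _),
      hunif i.val i.2 (f i.val) (hf i.val i.2)]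
  rw [Finset.prod_congr rfl (fun i _ => hterm i), Finset.prod_const,
    Finset.card_univ, Fintype.card_coe]

omit [MeasurableSpace Ω] in
lemma Ev_disjoint {F : Ω → ℕ → ℕ} {f g : ℕ → ℕ} (hf : f ∈ FunSet S G)
    (hg : g ∈ FunSet S G) (hfg : f ≠ g) : Disjoint (Ev G F f) (Ev G F g) := by
  rw [Set.disjoint_left]
  intro ω hωf hωg
  apply hfg
  funext i
  by_cases hi : i ∈ G
  · rw [← mem_Ev.1 hωf i hi, ← mem_Ev.1 hωg i hi]
  · rw [(mem_FunSet.1 hf).2 i hi, (mem_FunSet.1 hg).2 i hi]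

end

end CFAux

/-- Let `S` be a finite nonempty set of positive integers with `|S| = n` and let
`G ⊆ S` with `|G| = k`.  The number of cycle-free `S`-maps with `f i ∈ S` for
`i ∈ G` and `f i = 0` otherwise equals `(n - k) * n ^ (k - 1)` when `k ≥ 1`, and
equals `1` when `k = 0`.  Equivalently, a random `S`-map `F` with `F i = 0` for
`i ∉ G` and `F i` uniform on `S`, independently for `i ∈ G`, has a cycle with
probability `k / n`. -/
theorem cycleFree_count_goodSet
    (S : Finset ℕ) (hS : S.Nonempty) (hpos : ∀ i ∈ S, 0 < i)
    (G : Finset ℕ) (hGS : G ⊆ S)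
    (n k : ℕ) (hn : S.card = n) (hk : G.card = k)
    {Ω : Type*} [MeasurableSpace Ω] (μ : Measure Ω) [IsProbabilityMeasure μ]
    (F : Ω → ℕ → ℕ)
    (hF0 : ∀ ω, ∀ i ∉ G, F ω i = 0)
    (hmeas : ∀ i ∈ G, Measurable fun ω => F ω i)
    (hindep : ProbabilityTheory.iIndepFun
      (fun (i : {i // i ∈ G}) ω => F ω i.val) μ)
    (hunif : ∀ i ∈ G, ∀ j ∈ S, (μ {ω | F ω i = j}).toReal = 1 / n) :
    ((1 ≤ k →
        {f : ℕ → ℕ | (∀ i ∈ G, f i ∈ S) ∧ (∀ i ∉ G, f i = 0) ∧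
          ¬ HasCycle S f}.ncard = (n - k) * n ^ (k - 1)) ∧
      (k = 0 →
        {f : ℕ → ℕ | (∀ i ∈ G, f i ∈ S) ∧ (∀ i ∉ G, f i = 0) ∧
          ¬ HasCycle S f}.ncard = 1))
    ∧ (μ {ω | HasCycle S (F ω)}).toReal = (k : ℝ) / n := by
  classical
  subst hn hk
  have h0S : (0:ℕ) ∉ S := fun h => absurd (hpos 0 h) (lt_irrefl 0)
  have hn1 : 1 ≤ S.card := Finset.card_pos.2 hS
  have hkn : G.card ≤ S.card := Finset.card_le_card hGS
  open CFAux in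
  have hsetEq : {f : ℕ → ℕ | (∀ i ∈ G, f i ∈ S) ∧ (∀ i ∉ G, f i = 0) ∧
      ¬ HasCycle S f} = ↑((FunSet S G).filter fun f => ¬ Pcyc G f) := by
    ext f
    simp only [Set.mem_setOf_eq, Finset.coe_filter, mem_FunSet]
    constructor
    · rintro ⟨h1, h2, h3⟩
      exact ⟨⟨h1, h2⟩, fun hp => h3 ((hasCycle_iff h0S hGS h1 h2).2 hp)⟩
    · rintro ⟨⟨h1, h2⟩, h3⟩
      exact ⟨h1, h2, fun hc => h3 ((hasCycle_iff h0S hGS h1 h2).1 hc)⟩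
  open CFAux in
  have hcount : {f : ℕ → ℕ | (∀ i ∈ G, f i ∈ S) ∧ (∀ i ∉ G, f i = 0) ∧
      ¬ HasCycle S f}.ncard = Dv S.card G.card := by
    rw [hsetEq, Set.ncard_coe_finset, Ncf_eq h0S G.card G le_rfl hGS]
  refine ⟨⟨fun h1k => ?_, fun hk0 => ?_⟩, ?_⟩
  · rw [hcount]
    have hne : ¬ (G.card = 0) := Nat.one_le_iff_ne_zero.mp h1k
    simp only [Dv, if_neg hne]
  · rw [hcount]
    simp only [Dv, if_pos hk0]
  -- probability part
  · open CFAux in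
    set Cyc : Finset (ℕ → ℕ) := (FunSet S G).filter (fun f => Pcyc G f) with hCycDef
    have hsplit : Cyc.card + ((FunSet S G).filter fun f => ¬ Pcyc G f).card
        = S.card ^ G.card := by
      rw [Finset.card_filter_add_card_filter_not, card_FunSet]
    have hNcf : ((FunSet S G).filter fun f => ¬ Pcyc G f).card = Dv S.card G.card :=
      Ncf_eq h0S G.card G le_rfl hGS
    have hCycCard : Cyc.card = G.card * S.card ^ (G.card - 1) := by
      clear hsetEq hcount
      rcases Nat.eq_zero_or_pos G.card with hk0 | hk1
      · rw [hNcf] at hsplit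
        simp only [Dv, hk0, if_pos, pow_zero] at hsplit
        simp only [hk0, Nat.zero_mul]
        omega
      · have hne : ¬ (G.card = 0) := Nat.one_le_iff_ne_zero.mp hk1
        have hpow : (S.card - G.card) * S.card ^ (G.card - 1)
            + G.card * S.card ^ (G.card - 1) = S.card ^ G.card := by
          rw [← Nat.add_mul, Nat.sub_add_cancel hkn, ← pow_succ']
          congr 1
          omega
        rw [hNcf] at hsplit
        simp only [Dv, if_neg hne] at hsplit
        omega
    set A : Set Ω := ⋂ i ∈ G, (fun ω => F ω i) ⁻¹' (↑S : Set ℕ) with hA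
    have hAmeas : MeasurableSet A :=
      MeasurableSet.biInter (Set.to_countable _)
        (fun i hi => (hmeas i hi) (Set.to_countable _).measurableSet)
    have hcoordS : ∀ i ∈ G, μ ((fun ω => F ω i) ⁻¹' (↑S : Set ℕ)) = 1 := by
      intro i hi
      have hdecomp : ((fun ω => F ω i) ⁻¹' (↑S : Set ℕ))
          = ⋃ j ∈ S, (fun ω => F ω i) ⁻¹' {j} := by
        ext ω; simp
      rw [hdecomp, measure_biUnion_finset ?_ (fun j _ => (hmeas i hi) (measurableSet_singleton _))]
      · have hterm : ∀ j ∈ S, μ ((fun ω => F ω i) ⁻¹' {j})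
            = ENNReal.ofReal (1/(S.card:ℝ)) := by
          intro j hj
          rw [← ENNReal.ofReal_toReal (measure_ne_top μ _)]
          congr 1
          exact hunif i hi j hj
        rw [Finset.sum_congr rfl hterm, Finset.sum_const, nsmul_eq_mul]
        rw [one_div, ENNReal.ofReal_inv_of_pos (by exact_mod_cast hn1), ENNReal.ofReal_natCast]
        exact ENNReal.mul_inv_cancel (by exact_mod_cast Nat.one_le_iff_ne_zero.mp hn1)
          (ENNReal.natCast_ne_top _)
      · intro j hj j' hj' hjj'
        rw [Function.onFun, Set.disjoint_left]
        intro ω hω hω'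
        exact hjj' ((Set.mem_preimage.1 hω).symm.trans (Set.mem_preimage.1 hω'))
    have hAc : μ Aᶜ = 0 := by
      have hsub : Aᶜ ⊆ ⋃ i ∈ G, ((fun ω => F ω i) ⁻¹' (↑S : Set ℕ))ᶜ := by
        rw [hA, Set.compl_iInter₂]
      refine le_antisymm (le_trans (measure_mono hsub) (le_trans (measure_biUnion_finset_le _ _) ?_)) zero_le
      have hzero : ∀ i ∈ G, μ (((fun ω => F ω i) ⁻¹' (↑S : Set ℕ))ᶜ) = 0 := by
        intro i hi
        rw [measure_compl ((hmeas i hi) (Set.to_countable _).measurableSet)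
          (measure_ne_top μ _), hcoordS i hi, measure_univ, tsub_self]
      rw [Finset.sum_congr rfl hzero, Finset.sum_const, smul_zero]
    have hXinter : {ω | HasCycle S (F ω)} ∩ A = ⋃ f ∈ Cyc, Ev G F f := by
      ext ω
      simp only [Set.mem_inter_iff, Set.mem_setOf_eq, Set.mem_iUnion, exists_prop]
      constructor
      · rintro ⟨hcyc, hA'⟩
        rw [hA] at hA'
        have hFS : ∀ i ∈ G, F ω i ∈ S := fun i hi => Set.mem_iInter₂.1 hA' i hi
        have hF2 : ∀ i ∉ G, F ω i = 0 := fun i hi => hF0 ω i hi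
        have hmem : F ω ∈ FunSet S G := mem_FunSet.2 ⟨hFS, hF2⟩
        refine ⟨F ω, Finset.mem_filter.2 ⟨hmem,
          (hasCycle_iff h0S hGS hFS hF2).1 hcyc⟩, mem_Ev.2 fun i hi => rfl⟩
      · rintro ⟨f, hfC, hωf⟩
        obtain ⟨hfF, hfP⟩ := Finset.mem_filter.1 hfC
        have hFf : F ω = f := by
          funext i
          by_cases hi : i ∈ G
          · exact mem_Ev.1 hωf i hi
          · rw [hF0 ω i hi, (mem_FunSet.1 hfF).2 i hi]
        constructor
        · rw [hFf]
          exact (hasCycle_iff h0S hGS (mem_FunSet.1 hfF).1 (mem_FunSet.1 hfF).2).2 hfP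
        · rw [hA]
          refine Set.mem_iInter₂.2 fun i hi => ?_
          show F ω i ∈ (↑S : Set ℕ)
          rw [hFf]
          exact (mem_FunSet.1 hfF).1 i hi
    have hXsplit : μ {ω | HasCycle S (F ω)} = μ ({ω | HasCycle S (F ω)} ∩ A) := by
      have h1 := measure_inter_add_diff (μ := μ) {ω | HasCycle S (F ω)} hAmeas
      have h2 : μ ({ω | HasCycle S (F ω)} \ A) = 0 :=
        le_antisymm (le_trans (measure_mono (fun ω hω => hω.2)) hAc.le) zero_le
      rw [← h1, h2, add_zero]
    have hXval : μ ({ω | HasCycle S (F ω)} ∩ A)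
        = (Cyc.card : ENNReal) * ENNReal.ofReal (1/(S.card:ℝ)) ^ G.card := by
      rw [hXinter, measure_biUnion_finset ?_ (fun f _ => Ev_measurable hmeas f)]
      · have hterm : ∀ f ∈ Cyc, μ (Ev G F f)
            = ENNReal.ofReal (1/(S.card:ℝ)) ^ G.card := by
          intro f hf
          exact Ev_measure μ hindep hunif (mem_FunSet.1 (Finset.mem_filter.1 hf).1).1
        rw [Finset.sum_congr rfl hterm, Finset.sum_const, nsmul_eq_mul]
      · intro f hf g hg hfg
        exact Ev_disjoint (Finset.mem_filter.1 hf).1 (Finset.mem_filter.1 hg).1 hfg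
    rw [hXsplit, hXval, hCycCard]
    rw [ENNReal.toReal_mul, ENNReal.toReal_pow, ENNReal.toReal_natCast,
      ENNReal.toReal_ofReal (by positivity)]
    have hn0 : ((S.card : ℝ)) ≠ 0 := Nat.cast_ne_zero.2 (Nat.one_le_iff_ne_zero.mp hn1)
    rcases Nat.eq_zero_or_pos G.card with hk0 | hk1
    · rw [hk0]; simp
    · push_cast
      rw [one_div, inv_pow, eq_div_iff hn0]
      have hpow : ((S.card:ℝ))^(G.card) = (S.card:ℝ)^(G.card-1) * S.card := by
        rw [← pow_succ]
        congr 1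
        exact (Nat.succ_pred_eq_of_pos hk1).symm
      rw [hpow]
      have hp0 : ((S.card:ℝ))^(G.card-1) ≠ 0 := pow_ne_zero _ hn0
      field_simp
end

section
/- Let S be a finite nonempty set of positive integers with |S| = n, let π be a probability distribution on S, and let G ⊆ S with |G| = k, 0 < k < n. Let f be a random S-map with f(i) = 0 for all i ∈ S \ G and with the values f(i) for i ∈ G chosen independently from S according to π. Then the probability that f has a cycle equals Σ_{i ∈ G} π(i). -/
open MeasureTheory

open Function

/-- There is a cycle of `f` entirely inside `H`. -/
def CycIn (H : Finset ℕ) (f : ℕ → ℕ) : Prop :=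
  ∃ g ∈ H, ∃ m : ℕ, f^[m+1] g = g ∧ ∀ i ≤ m, f^[i] g ∈ H

/-- The forward orbit of `j` reaches `E` while staying in `H` beforehand. -/
def Reaches (H E : Finset ℕ) (j : ℕ) (f : ℕ → ℕ) : Prop :=
  ∃ m : ℕ, f^[m] j ∈ E ∧ ∀ i < m, f^[i] j ∈ H

lemma iterate_eq_of_eqOn {H : Finset ℕ} {f g : ℕ → ℕ} (h : ∀ x ∈ H, f x = g x)
    {x : ℕ} {m : ℕ} (hx : ∀ i < m, f^[i] x ∈ H) : ∀ i ≤ m, f^[i] x = g^[i] x := by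
  intro i hi
  induction i with
  | zero => simp
  | succ i ih =>
    rw [Function.iterate_succ_apply', Function.iterate_succ_apply',
      ← ih (le_of_lt (Nat.lt_of_succ_le hi)), h _ (hx i (Nat.lt_of_succ_le hi))]

lemma CycIn.congr {H : Finset ℕ} {f g : ℕ → ℕ} (h : ∀ x ∈ H, f x = g x) :
    CycIn H f → CycIn H g := by
  rintro ⟨a, ha, m, hper, hin⟩
  have hlt : ∀ i < m + 1, f^[i] a ∈ H := fun i hi => hin i (Nat.lt_succ_iff.mp hi)
  have heq := iterate_eq_of_eqOn h hlt
  exact ⟨a, ha, m, by rw [← heq (m+1) le_rfl]; exact hper,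
    fun i hi => by rw [← heq i (le_trans hi (Nat.le_succ m))]; exact hin i hi⟩

lemma CycIn.congr_iff {H : Finset ℕ} {f g : ℕ → ℕ} (h : ∀ x ∈ H, f x = g x) :
    CycIn H f ↔ CycIn H g :=
  ⟨CycIn.congr h, CycIn.congr (fun x hx => (h x hx).symm)⟩

lemma Reaches.congr {H E : Finset ℕ} {j : ℕ} {f g : ℕ → ℕ} (h : ∀ x ∈ H, f x = g x) :
    Reaches H E j f → Reaches H E j g := by
  rintro ⟨m, hm, hin⟩
  have heq := iterate_eq_of_eqOn h hin
  exact ⟨m, by rw [← heq m le_rfl]; exact hm,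
    fun i hi => by rw [← heq i (le_of_lt hi)]; exact hin i hi⟩

lemma Reaches.congr_iff {H E : Finset ℕ} {j : ℕ} {f g : ℕ → ℕ} (h : ∀ x ∈ H, f x = g x) :
    Reaches H E j f ↔ Reaches H E j g :=
  ⟨Reaches.congr h, Reaches.congr (fun x hx => (h x hx).symm)⟩

lemma CycIn.mono {H H' : Finset ℕ} {f : ℕ → ℕ} (hsub : H' ⊆ H) :
    CycIn H' f → CycIn H f := by
  rintro ⟨a, ha, m, hper, hin⟩
  exact ⟨a, hsub ha, m, hper, fun i hi => hsub (hin i hi)⟩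

lemma iterate_mul_fixed {f : ℕ → ℕ} {p x : ℕ} (h : f^[p] x = x) : ∀ k, f^[p*k] x = x := by
  intro k
  induction k with
  | zero => simp
  | succ k ih => rw [Nat.mul_succ, Function.iterate_add_apply, h, ih]

lemma iterate_mod {f : ℕ → ℕ} {p x : ℕ} (h : f^[p] x = x) (n : ℕ) :
    f^[n] x = f^[n % p] x := by
  conv_lhs => rw [← Nat.mod_add_div n p]
  rw [Function.iterate_add_apply, iterate_mul_fixed h (n / p)]

section cases
variable {H E : Finset ℕ} {f : ℕ → ℕ} {j₀ : ℕ}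

lemma caseA (hj₀ : j₀ ∈ H) (h : f j₀ ∈ E) : CycIn H f ∨ Reaches H E j₀ f := by
  right
  refine ⟨1, by simpa using h, ?_⟩
  intro i hi
  interval_cases i
  simpa using hj₀

lemma caseB (hj₀ : j₀ ∈ H) (h : f j₀ = j₀) : CycIn H f ∨ Reaches H E j₀ f := by
  left
  exact ⟨j₀, hj₀, 0, by simpa using h, fun i hi => by interval_cases i; simpa using hj₀⟩

lemma caseC (hj₀ : j₀ ∈ H) (hE : j₀ ∉ E) (h1 : f j₀ ∉ H) (h2 : f j₀ ∉ E) :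
    (CycIn H f ∨ Reaches H E j₀ f) ↔ CycIn (H.erase j₀) f := by
  constructor
  · rintro (⟨a, ha, m, hper, hin⟩ | ⟨m, hm, hin⟩)
    · -- no iterate equals j₀
      have hne : ∀ i ≤ m, f^[i] a ≠ j₀ := by
        intro i hi hij
        have : f^[i+1] a = f j₀ := by rw [Function.iterate_succ_apply', hij]
        rcases Nat.lt_or_ge i m with hlt | hge
        · exact h1 (this ▸ hin (i+1) (Nat.succ_le_of_lt hlt))
        · have him : i = m := le_antisymm hi hge
          rw [him] at this
          rw [hper] at this
          exact h1 (this ▸ ha)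
      exact ⟨a, Finset.mem_erase.mpr ⟨by simpa using hne 0 (Nat.zero_le m), ha⟩, m, hper,
        fun i hi => Finset.mem_erase.mpr ⟨hne i hi, hin i hi⟩⟩
    · -- Reaches impossible
      exfalso
      match m, hm, hin with
      | 0, hm, _ => exact hE (by simpa using hm)
      | 1, hm, _ => exact h2 (by simpa using hm)
      | (l+2), hm, hin =>
        have := hin 1 (by omega)
        simp only [Function.iterate_one] at this
        exact h1 this
  · rintro ⟨a, ha, m, hper, hin⟩
    exact Or.inl ⟨a, Finset.mem_of_mem_erase ha, m, hper,
      fun i hi => Finset.mem_of_mem_erase (hin i hi)⟩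

lemma caseD (hj₀ : j₀ ∈ H) (hE : j₀ ∉ E) (h1 : f j₀ ∈ H) (h2 : f j₀ ≠ j₀) :
    (CycIn H f ∨ Reaches H E j₀ f) ↔
      (CycIn (H.erase j₀) f ∨ Reaches (H.erase j₀) (insert j₀ E) (f j₀) f) := by
  set j := f j₀ with hj
  constructor
  · rintro (⟨a, ha, m, hper, hin⟩ | ⟨m, hm, hin⟩)
    · by_cases hcase : ∀ i ≤ m, f^[i] a ≠ j₀
      · exact Or.inl ⟨a, Finset.mem_erase.mpr ⟨by simpa using hcase 0 (Nat.zero_le m), ha⟩,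
          m, hper, fun i hi => Finset.mem_erase.mpr ⟨hcase i hi, hin i hi⟩⟩
      · push_neg at hcase
        obtain ⟨i₀, hi₀m, hi₀⟩ := hcase
        right
        set p := m + 1 with hp
        have hpfix : f^[p] j₀ = j₀ := by
          rw [← hi₀, ← Function.iterate_add_apply, Nat.add_comm,
            Function.iterate_add_apply, hper]
        have horb : ∀ i, f^[i] j₀ ∈ H := by
          intro i
          have : f^[i] j₀ = f^[(i + i₀) % p] a := by
            rw [← hi₀, ← Function.iterate_add_apply]
            exact iterate_mod hper (i + i₀)
          rw [this]
          exact hin _ (Nat.lt_succ_iff.mp (Nat.mod_lt _ (Nat.succ_pos m)))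
        have hex : ∃ r, f^[r] j = j₀ := by
          refine ⟨m, ?_⟩
          rw [hj, ← Function.iterate_succ_apply]
          exact hpfix
        let r := Nat.find hex
        refine ⟨r, Finset.mem_insert.mpr (Or.inl (Nat.find_spec hex)), ?_⟩
        intro i hi
        refine Finset.mem_erase.mpr ⟨Nat.find_min hex hi, ?_⟩
        rw [hj, ← Function.iterate_succ_apply]
        exact horb (i+1)
    · -- Reaches H E j₀ f; m ≥ 1 since j₀ ∉ E
      right
      have hm1 : 1 ≤ m := by
        rcases Nat.eq_zero_or_pos m with h0 | h; · exfalso; rw [h0] at hm; exact hE (by simpa using hm)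
        exact h
      have hex : ∃ r, f^[r] j ∈ insert j₀ E := by
        refine ⟨m - 1, Finset.mem_insert.mpr (Or.inr ?_)⟩
        rw [hj, ← Function.iterate_succ_apply, Nat.succ_eq_add_one, Nat.sub_add_cancel hm1]
        exact hm
      let r := Nat.find hex
      have hrm : r ≤ m - 1 := Nat.find_min' hex (by
        refine Finset.mem_insert.mpr (Or.inr ?_)
        rw [hj, ← Function.iterate_succ_apply, Nat.succ_eq_add_one, Nat.sub_add_cancel hm1]
        exact hm)
      refine ⟨r, Nat.find_spec hex, ?_⟩
      intro i hi
      have hiH : f^[i] j ∈ H := by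
        have : f^[i] j = f^[i+1] j₀ := by rw [hj, ← Function.iterate_succ_apply]
        rw [this]
        exact hin (i+1) (by omega)
      have : f^[i] j ∉ insert j₀ E := Nat.find_min hex hi
      exact Finset.mem_erase.mpr ⟨fun hc => this (Finset.mem_insert.mpr (Or.inl hc)), hiH⟩
  · rintro (hc | ⟨m, hm, hin⟩)
    · exact Or.inl (hc.mono (Finset.erase_subset _ _))
    · rcases Finset.mem_insert.mp hm with hmj₀ | hmE
      · -- cycle through j₀
        left
        refine ⟨j₀, hj₀, m, ?_, ?_⟩
        · rw [Function.iterate_succ_apply, ← hj, hmj₀]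
        · intro i hi
          match i with
          | 0 => simpa using hj₀
          | (l+1) =>
            rw [Function.iterate_succ_apply, ← hj]
            exact Finset.mem_of_mem_erase (hin l (by omega))
      · right
        refine ⟨m + 1, ?_, ?_⟩
        · rw [Function.iterate_succ_apply, ← hj]; exact hmE
        · intro i hi
          match i with
          | 0 => simpa using hj₀
          | (l+1) =>
            rw [Function.iterate_succ_apply, ← hj]
            exact Finset.mem_of_mem_erase (hin l (by omega))

end cases

section maps
open Classical in
/-- All maps `ℕ → ℕ` sending `H` into `S` and everything else to `0`. -/
noncomputable def Maps (S H : Finset ℕ) : Finset (ℕ → ℕ) :=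
  (H.pi (fun _ => S)).image fun p a => if h : a ∈ H then p a h else 0

lemma mem_Maps {S H : Finset ℕ} {V : ℕ → ℕ} :
    V ∈ Maps S H ↔ (∀ a ∈ H, V a ∈ S) ∧ (∀ a, a ∉ H → V a = 0) := by
  classical
  constructor
  · rintro hV
    simp only [Maps, Finset.mem_image] at hV
    obtain ⟨p, hp, rfl⟩ := hV
    rw [Finset.mem_pi] at hp
    constructor
    · intro a ha; simp [ha, hp a ha]
    · intro a ha; simp [ha]
  · rintro ⟨h1, h2⟩
    simp only [Maps, Finset.mem_image]
    refine ⟨fun a _ => V a, ?_, ?_⟩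
    · rw [Finset.mem_pi]; exact fun a ha => h1 a ha
    · funext a
      by_cases ha : a ∈ H
      · simp [ha]
      · simp [ha, h2 a ha]

lemma Maps_insert {S H : Finset ℕ} (hS0 : (0:ℕ) ∉ S) {j₀ : ℕ} (hj₀ : j₀ ∉ H)
    (g : (ℕ → ℕ) → ℝ) :
    ∑ V ∈ Maps S (insert j₀ H), g V
      = ∑ j ∈ S, ∑ V ∈ Maps S H, g (Function.update V j₀ j) := by
  classical
  have himg : Maps S (insert j₀ H) = (S ×ˢ Maps S H).image fun q => Function.update q.2 j₀ q.1 := by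
    ext V
    rw [mem_Maps, Finset.mem_image]
    constructor
    · rintro ⟨h1, h2⟩
      refine ⟨(V j₀, Function.update V j₀ 0), ?_, ?_⟩
      · rw [Finset.mem_product]
        refine ⟨h1 j₀ (Finset.mem_insert_self _ _), ?_⟩
        rw [mem_Maps]
        constructor
        · intro a ha
          have hne : a ≠ j₀ := fun h => hj₀ (h ▸ ha)
          show Function.update V j₀ 0 a ∈ S
          rw [Function.update_of_ne hne]
          exact h1 a (Finset.mem_insert_of_mem ha)
        · intro a ha
          by_cases hje : a = j₀
          · show Function.update V j₀ 0 a = 0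
            rw [hje]; simp
          · show Function.update V j₀ 0 a = 0
            rw [Function.update_of_ne hje]
            exact h2 a (by simp [hje, ha])
      · funext a
        by_cases hje : a = j₀
        · subst hje; simp
        · simp [Function.update_of_ne hje]
    · rintro ⟨⟨j, W⟩, hq, rfl⟩
      rw [Finset.mem_product] at hq
      obtain ⟨hjS, hW⟩ := hq
      rw [mem_Maps] at hW
      constructor
      · intro a ha
        rcases Finset.mem_insert.mp ha with h | h
        · subst h; simpa using hjS
        · have hne : a ≠ j₀ := fun he => hj₀ (he ▸ h)
          rw [Function.update_of_ne hne]; exact hW.1 a h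
      · intro a ha
        have hne : a ≠ j₀ := fun he => ha (he ▸ Finset.mem_insert_self _ _)
        rw [Function.update_of_ne hne]
        exact hW.2 a (fun h => ha (Finset.mem_insert_of_mem h))
  rw [himg, Finset.sum_image, Finset.sum_product]
  rintro ⟨j₁, V₁⟩ hq1 ⟨j₂, V₂⟩ hq2 heq
  rw [Finset.mem_coe, Finset.mem_product] at hq1 hq2
  simp only at hq1 hq2 heq ⊢
  have hj : j₁ = j₂ := by
    have := congrFun heq j₀; simpa using this
  have hV : V₁ = V₂ := by
    funext a
    by_cases hje : a = j₀
    · rw [hje, (mem_Maps.mp hq1.2).2 j₀ hj₀, (mem_Maps.mp hq2.2).2 j₀ hj₀]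
    · have := congrFun heq a
      simpa [Function.update_of_ne hje] using this
  rw [hj, hV]

end maps

section sums
variable {S : Finset ℕ} {π : ℕ → ℝ}

lemma weight_update {π : ℕ → ℝ} {H : Finset ℕ} {j₀ : ℕ} (hj₀ : j₀ ∉ H) (V : ℕ → ℕ) (j : ℕ) :
    ∏ a ∈ insert j₀ H, π (Function.update V j₀ j a) = π j * ∏ a ∈ H, π (V a) := by
  rw [Finset.prod_insert hj₀]
  congr 1
  · simp
  · refine Finset.prod_congr rfl fun a ha => ?_
    have hne : a ≠ j₀ := by rintro rfl; exact hj₀ ha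
    rw [Function.update_of_ne hne]

lemma total_weight (hS0 : (0:ℕ) ∉ S) (hπ1 : ∑ i ∈ S, π i = 1) :
    ∀ H : Finset ℕ, ∑ V ∈ Maps S H, ∏ a ∈ H, π (V a) = 1 := by
  intro H
  induction H using Finset.induction_on with
  | empty =>
    have : Maps S ∅ = {fun _ => 0} := by
      ext V
      rw [mem_Maps]
      simp [funext_iff]
    rw [this]
    simp
  | @insert j₀ H hj₀ ih =>
    rw [Maps_insert hS0 hj₀]
    calc ∑ j ∈ S, ∑ V ∈ Maps S H, ∏ a ∈ insert j₀ H, π (Function.update V j₀ j a)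
        = ∑ j ∈ S, ∑ V ∈ Maps S H, π j * ∏ a ∈ H, π (V a) := by
          refine Finset.sum_congr rfl fun j _ => Finset.sum_congr rfl fun V _ => ?_
          exact weight_update hj₀ V j
      _ = ∑ j ∈ S, π j * ∑ V ∈ Maps S H, ∏ a ∈ H, π (V a) := by
          refine Finset.sum_congr rfl fun j _ => ?_
          rw [Finset.mul_sum]
      _ = 1 := by simp only [ih, mul_one]; exact hπ1

open Classical in
/-- The main quantity: probability weight of maps on `H` which either have a cycle in `H`
or whose orbit from `j₀` reaches `E`. -/
noncomputable def DSum (S : Finset ℕ) (π : ℕ → ℝ) (H E : Finset ℕ) (j₀ : ℕ) : ℝ :=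
  ∑ V ∈ Maps S H, if CycIn H V ∨ Reaches H E j₀ V then ∏ a ∈ H, π (V a) else 0

open Classical in
noncomputable def CSum (S : Finset ℕ) (π : ℕ → ℝ) (H : Finset ℕ) : ℝ :=
  ∑ V ∈ Maps S H, if CycIn H V then ∏ a ∈ H, π (V a) else 0


lemma Reaches_empty {H : Finset ℕ} {j : ℕ} {f : ℕ → ℕ} : ¬ Reaches H ∅ j f := by
  rintro ⟨m, hm, -⟩; exact absurd hm (Finset.notMem_empty _)

lemma CycIn_empty {f : ℕ → ℕ} : ¬ CycIn ∅ f := by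
  rintro ⟨g, hg, -⟩; exact absurd hg (Finset.notMem_empty _)

lemma sum_region_split (S A H' : Finset ℕ) (hAS : A ⊆ S) (hH'SA : H' ⊆ S \ A) (g : ℕ → ℝ) :
    ∑ j ∈ S, g j = (∑ j ∈ (S \ A) \ H', g j + ∑ j ∈ H', g j) + ∑ j ∈ A, g j := by
  rw [← Finset.sum_sdiff hAS, ← Finset.sum_sdiff hH'SA]

lemma main_comb {S : Finset ℕ} {π : ℕ → ℝ} (hS0 : (0:ℕ) ∉ S) (hπ1 : ∑ i ∈ S, π i = 1) :
    ∀ n : ℕ, ∀ H : Finset ℕ, H.card = n → H ⊆ S →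
      ∀ E : Finset ℕ, E ⊆ S → Disjoint H E → ∀ j₀ ∈ H,
        DSum S π H E j₀ = (∑ i ∈ H, π i) + ∑ i ∈ E, π i := by
  intro n
  induction n using Nat.strong_induction_on with
  | _ n ih =>
  intro H hcard hHS E hES hdisj j₀ hj₀
  classical
  have hCSum : ∀ H' : Finset ℕ, H'.card < n → H' ⊆ S → CSum S π H' = ∑ i ∈ H', π i := by
    intro H' hlt hsub
    rcases Finset.eq_empty_or_nonempty H' with rfl | ⟨j₁, hj₁⟩
    · simp [CSum, CycIn_empty]
    · have hcd : CSum S π H' = DSum S π H' ∅ j₁ := by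
        unfold CSum DSum
        refine Finset.sum_congr rfl fun V _ => ?_
        refine if_congr ⟨Or.inl, ?_⟩ rfl rfl
        rintro (h | h)
        · exact h
        · exact absurd h Reaches_empty
      rw [hcd, ih _ hlt H' rfl hsub ∅ (Finset.empty_subset S)
        (Finset.disjoint_right.mpr (fun a ha => absurd ha (Finset.notMem_empty a))) j₁ hj₁]
      simp
  set H' := H.erase j₀ with hH'
  have hj₀H' : j₀ ∉ H' := Finset.notMem_erase _ _
  have hHi : H = insert j₀ H' := (Finset.insert_erase hj₀).symm
  have hH'S : H' ⊆ S := (Finset.erase_subset _ _).trans hHS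
  have hH'card : H'.card < n := by
    rw [← hcard]; exact Finset.card_erase_lt_of_mem hj₀
  have hj₀E : j₀ ∉ E := Finset.disjoint_left.mp hdisj hj₀
  have hj₀S : j₀ ∈ S := hHS hj₀
  have herase : (insert j₀ H').erase j₀ = H' := Finset.erase_insert hj₀H'
  set A : Finset ℕ := insert j₀ E with hA
  have hAS : A ⊆ S := Finset.insert_subset hj₀S hES
  have hH'A : ∀ a ∈ H', a ∉ A := by
    intro a ha hmem
    rcases Finset.mem_insert.mp hmem with rfl | hmem
    · exact hj₀H' ha
    · exact Finset.disjoint_left.mp hdisj (Finset.mem_of_mem_erase ha) hmem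
  have hH'SA : H' ⊆ S \ A := fun a ha =>
    Finset.mem_sdiff.mpr ⟨hH'S ha, hH'A a ha⟩
  -- unfold and regroup
  unfold DSum
  rw [hHi, Maps_insert hS0 hj₀H']
  rw [sum_region_split S A H' hAS hH'SA]
  -- notation for U
  have hUeq : ∀ (V : ℕ → ℕ) (j : ℕ), ∀ a ∈ H', Function.update V j₀ j a = V a := by
    intro V j a ha
    exact Function.update_of_ne (by rintro rfl; exact hj₀H' ha) _ _
  -- region A : indicator is 1
  have hregA : ∀ j ∈ A, (∑ V ∈ Maps S H',
      if CycIn (insert j₀ H') (Function.update V j₀ j) ∨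
          Reaches (insert j₀ H') E j₀ (Function.update V j₀ j)
        then ∏ a ∈ insert j₀ H', π (Function.update V j₀ j a) else 0) = π j := by
    intro j hjA
    have : ∀ V ∈ Maps S H',
        (if CycIn (insert j₀ H') (Function.update V j₀ j) ∨
            Reaches (insert j₀ H') E j₀ (Function.update V j₀ j)
          then ∏ a ∈ insert j₀ H', π (Function.update V j₀ j a) else 0)
        = π j * ∏ a ∈ H', π (V a) := by
      intro V _
      have hUj₀ : Function.update V j₀ j j₀ = j := Function.update_self _ _ _
      have hP : CycIn (insert j₀ H') (Function.update V j₀ j) ∨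
          Reaches (insert j₀ H') E j₀ (Function.update V j₀ j) := by
        rcases Finset.mem_insert.mp hjA with rfl | hjE
        · exact caseB (Finset.mem_insert_self _ _) hUj₀
        · exact caseA (Finset.mem_insert_self _ _) (by rw [hUj₀]; exact hjE)
      rw [if_pos hP, weight_update hj₀H']
    rw [Finset.sum_congr rfl this, ← Finset.mul_sum, total_weight hS0 hπ1 H', mul_one]
  -- region H'
  have hregH' : ∀ j ∈ H', (∑ V ∈ Maps S H',
      if CycIn (insert j₀ H') (Function.update V j₀ j) ∨
          Reaches (insert j₀ H') E j₀ (Function.update V j₀ j)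
        then ∏ a ∈ insert j₀ H', π (Function.update V j₀ j a) else 0)
      = π j * ((∑ i ∈ H', π i) + ∑ i ∈ A, π i) := by
    intro j hjH'
    have hne : j ≠ j₀ := by rintro rfl; exact hj₀H' hjH'
    have hstep : ∀ V ∈ Maps S H',
        (if CycIn (insert j₀ H') (Function.update V j₀ j) ∨
            Reaches (insert j₀ H') E j₀ (Function.update V j₀ j)
          then ∏ a ∈ insert j₀ H', π (Function.update V j₀ j a) else 0)
        = π j * (if CycIn H' V ∨ Reaches H' A j V then ∏ a ∈ H', π (V a) else 0) := by
      intro V _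
      have hUj₀ : Function.update V j₀ j j₀ = j := Function.update_self _ _ _
      have hiff : (CycIn (insert j₀ H') (Function.update V j₀ j) ∨
            Reaches (insert j₀ H') E j₀ (Function.update V j₀ j))
          ↔ (CycIn H' V ∨ Reaches H' A j V) := by
        have h1 : Function.update V j₀ j j₀ ∈ insert j₀ H' := by
          rw [hUj₀]; exact Finset.mem_insert_of_mem hjH'
        have h2 : Function.update V j₀ j j₀ ≠ j₀ := by rw [hUj₀]; exact hne
        have hD := caseD (f := Function.update V j₀ j) (E := E)
          (Finset.mem_insert_self j₀ H') hj₀E h1 h2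
        rw [herase, hUj₀] at hD
        rw [hD]
        constructor
        · rintro (h | h)
          · exact Or.inl ((CycIn.congr_iff (hUeq V j)).mp h)
          · exact Or.inr ((Reaches.congr_iff (hUeq V j)).mp h)
        · rintro (h | h)
          · exact Or.inl ((CycIn.congr_iff (hUeq V j)).mpr h)
          · exact Or.inr ((Reaches.congr_iff (hUeq V j)).mpr h)
      by_cases hP : CycIn H' V ∨ Reaches H' A j V
      · rw [if_pos (hiff.mpr hP), if_pos hP, weight_update hj₀H']
      · rw [if_neg (fun h => hP (hiff.mp h)), if_neg hP, mul_zero]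
    rw [Finset.sum_congr rfl hstep, ← Finset.mul_sum]
    congr 1
    have hDS : (∑ V ∈ Maps S H',
        if CycIn H' V ∨ Reaches H' A j V then ∏ a ∈ H', π (V a) else 0)
        = DSum S π H' A j := rfl
    rw [hDS, ih _ hH'card H' rfl hH'S A hAS
      (Finset.disjoint_left.mpr hH'A) j hjH']
  -- rest region
  have hregR : ∀ j ∈ (S \ A) \ H', (∑ V ∈ Maps S H',
      if CycIn (insert j₀ H') (Function.update V j₀ j) ∨
          Reaches (insert j₀ H') E j₀ (Function.update V j₀ j)
        then ∏ a ∈ insert j₀ H', π (Function.update V j₀ j a) else 0)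
      = π j * ∑ i ∈ H', π i := by
    intro j hj
    obtain ⟨hjSA, hjH'⟩ := Finset.mem_sdiff.mp hj
    obtain ⟨hjS, hjA⟩ := Finset.mem_sdiff.mp hjSA
    have hne : j ≠ j₀ := fun h => hjA (h ▸ Finset.mem_insert_self _ _)
    have hjE : j ∉ E := fun h => hjA (Finset.mem_insert_of_mem h)
    have hstep : ∀ V ∈ Maps S H',
        (if CycIn (insert j₀ H') (Function.update V j₀ j) ∨
            Reaches (insert j₀ H') E j₀ (Function.update V j₀ j)
          then ∏ a ∈ insert j₀ H', π (Function.update V j₀ j a) else 0)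
        = π j * (if CycIn H' V then ∏ a ∈ H', π (V a) else 0) := by
      intro V _
      have hUj₀ : Function.update V j₀ j j₀ = j := Function.update_self _ _ _
      have hiff : (CycIn (insert j₀ H') (Function.update V j₀ j) ∨
            Reaches (insert j₀ H') E j₀ (Function.update V j₀ j)) ↔ CycIn H' V := by
        have h1 : Function.update V j₀ j j₀ ∉ insert j₀ H' := by
          rw [hUj₀]
          intro h
          rcases Finset.mem_insert.mp h with h | h
          · exact hne h
          · exact hjH' h
        have h2 : Function.update V j₀ j j₀ ∉ E := by rw [hUj₀]; exact hjE
        have hC := caseC (f := Function.update V j₀ j)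
          (Finset.mem_insert_self j₀ H') hj₀E h1 h2
        rw [herase] at hC
        rw [hC]
        exact CycIn.congr_iff (hUeq V j)
      by_cases hP : CycIn H' V
      · rw [if_pos (hiff.mpr hP), if_pos hP, weight_update hj₀H']
      · rw [if_neg (fun h => hP (hiff.mp h)), if_neg hP, mul_zero]
    rw [Finset.sum_congr rfl hstep, ← Finset.mul_sum]
    congr 1
    have hCS : (∑ V ∈ Maps S H', if CycIn H' V then ∏ a ∈ H', π (V a) else 0)
        = CSum S π H' := rfl
    rw [hCS, hCSum H' hH'card hH'S]
  -- put it together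
  rw [Finset.sum_congr rfl hregA, Finset.sum_congr rfl hregH', Finset.sum_congr rfl hregR]
  rw [← Finset.sum_mul, ← Finset.sum_mul]
  have hmassR : ∑ j ∈ (S \ A) \ H', π j = 1 - ((∑ i ∈ A, π i) + ∑ i ∈ H', π i) := by
    have h1 : ∑ j ∈ (S \ A) \ H', π j + ∑ j ∈ H', π j = ∑ j ∈ S \ A, π j :=
      Finset.sum_sdiff hH'SA
    have h2 : ∑ j ∈ S \ A, π j + ∑ j ∈ A, π j = ∑ j ∈ S, π j :=
      Finset.sum_sdiff hAS
    rw [hπ1] at h2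
    linarith
  have hmassH : ∑ i ∈ insert j₀ H', π i = π j₀ + ∑ i ∈ H', π i :=
    Finset.sum_insert hj₀H'
  have hmassA : ∑ i ∈ A, π i = π j₀ + ∑ i ∈ E, π i := Finset.sum_insert hj₀E
  rw [hmassR, hmassH, hmassA]
  ring

lemma hasCycle_iff_cycIn {S G : Finset ℕ} (hpos : ∀ i ∈ S, 0 < i) (hGS : G ⊆ S)
    {f : ℕ → ℕ} (hf0 : ∀ i ∈ S \ G, f i = 0) :
    HasCycle S f ↔ CycIn G f := by
  constructor
  · rintro ⟨k, a, hk, haS, hstep, hlast⟩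
    have hfa : ∀ i < k, f (a i) ∈ S := by
      intro i hi
      by_cases h : i + 1 < k
      · rw [hstep i h]; exact haS _ h
      · have : i = k - 1 := by omega
        rw [this, hlast]; exact haS 0 hk
    have haG : ∀ i < k, a i ∈ G := by
      intro i hi
      by_contra hcon
      have h0 : f (a i) = 0 := hf0 _ (Finset.mem_sdiff.mpr ⟨haS i hi, hcon⟩)
      have := hpos 0 (h0 ▸ hfa i hi)
      omega
    have hit : ∀ i < k, f^[i] (a 0) = a i := by
      intro i hi
      induction i with
      | zero => rfl
      | succ i ihh =>
        rw [Function.iterate_succ_apply', ihh (by omega), hstep i hi]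
    refine ⟨a 0, haG 0 hk, k - 1, ?_, ?_⟩
    · rw [Function.iterate_succ_apply', hit (k-1) (by omega), hlast]
    · intro i hi
      rw [hit i (by omega)]
      exact haG i (by omega)
  · rintro ⟨g, hg, m, hper, hin⟩
    refine ⟨m + 1, fun i => f^[i] g, Nat.succ_pos m, ?_, ?_, ?_⟩
    · intro i hi
      exact hGS (hin i (by omega))
    · intro i hi
      show f (f^[i] g) = f^[i+1] g
      exact (Function.iterate_succ_apply' f i g).symm
    · show f (f^[m + 1 - 1] g) = f^[0] g
      simp only [Nat.add_sub_cancel, Function.iterate_zero_apply]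
      exact (Function.iterate_succ_apply' f m g).symm.trans hper

end sums

/-- Let `S` be a finite nonempty set of positive integers with `|S| = n`, let `π` be
a probability distribution on `S`, and let `G ⊆ S` with `|G| = k`, `0 < k < n`.
Let `F` be a random `S`-map with `F i = 0` for `i ∈ S \ G` and with the values `F i`
for `i ∈ G` chosen independently from `S` according to `π`.  Then the probability
that `F` has a cycle equals `∑ i ∈ G, π i`. -/
theorem cycle_prob_fixed_goodSet
    (S : Finset ℕ) (hS : S.Nonempty) (hpos : ∀ i ∈ S, 0 < i)
    (n : ℕ) (hn : S.card = n)
    (π : ℕ → ℝ) (hπ0 : ∀ i ∈ S, 0 ≤ π i) (hπ1 : ∑ i ∈ S, π i = 1)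
    (G : Finset ℕ) (hGS : G ⊆ S) (k : ℕ) (hk : G.card = k)
    (hk0 : 0 < k) (hkn : k < n)
    {Ω : Type*} [MeasurableSpace Ω] (μ : Measure Ω) [IsProbabilityMeasure μ]
    (F : Ω → ℕ → ℕ)
    (hF0 : ∀ ω, ∀ i ∈ S \ G, F ω i = 0)
    (hmeas : ∀ i ∈ G, Measurable fun ω => F ω i)
    (hindep : ProbabilityTheory.iIndepFun
      (fun (i : {i // i ∈ G}) ω => F ω i.val) μ)
    (hval : ∀ i ∈ G, ∀ j ∈ S, (μ {ω | F ω i = j}).toReal = π j) :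
    (μ {ω | HasCycle S (F ω)}).toReal = ∑ i ∈ G, π i := by
  classical
  have hS0 : (0:ℕ) ∉ S := fun h => absurd (hpos 0 h) (lt_irrefl 0)
  have hGne : G.Nonempty := Finset.card_pos.mp (by omega)
  -- rewrite the event
  have hEv : {ω | HasCycle S (F ω)} = {ω | CycIn G (F ω)} := by
    ext ω
    exact hasCycle_iff_cycIn hpos hGS (hF0 ω)
  rw [hEv]
  -- atoms
  set Atom : (ℕ → ℕ) → Set Ω := fun V => {ω | ∀ i ∈ G, F ω i = V i} with hAtomDef
  have hAtom_meas : ∀ V : ℕ → ℕ, MeasurableSet (Atom V) := by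
    intro V
    have : Atom V = ⋂ i ∈ (G : Set ℕ), (fun ω => F ω i) ⁻¹' {V i} := by
      ext ω; simp [hAtomDef]
    rw [this]
    exact MeasurableSet.biInter (Set.to_countable _)
      (fun i hi => (hmeas i hi) (measurableSet_singleton _))
  have hval_set : ∀ i ∈ G, ∀ V : ℕ → ℕ,
      {ω | F ω i = V i} = (fun ω => F ω i) ⁻¹' {V i} := by
    intro i _ V; rfl
  have hAtom_prob : ∀ V : ℕ → ℕ, μ (Atom V) = ∏ i ∈ G, μ {ω | F ω i = V i} := by
    intro V
    have h1 := hindep.measure_inter_preimage_eq_mul (Finset.univ : Finset {i // i ∈ G})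
      (sets := fun i => {V i.1}) (fun i _ => measurableSet_singleton _)
    have h2 : (⋂ i ∈ (Finset.univ : Finset {i // i ∈ G}),
        (fun ω => F ω i.1) ⁻¹' {V i.1}) = Atom V := by
      ext ω
      simp [hAtomDef, Subtype.forall]
    rw [h2] at h1
    rw [h1]
    rw [← Finset.prod_coe_sort G (fun i => μ {ω | F ω i = V i})]
    rfl
  have hAtom_toReal : ∀ V ∈ Maps S G, (μ (Atom V)).toReal = ∏ i ∈ G, π (V i) := by
    intro V hV
    rw [hAtom_prob V, ENNReal.toReal_prod]
    exact Finset.prod_congr rfl fun i hi =>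
      hval i hi (V i) ((mem_Maps.mp hV).1 i hi)
  -- the good set
  have hSival : ∀ i ∈ G, μ {ω | F ω i ∈ S} = 1 := by
    intro i hi
    have hsets : {ω | F ω i ∈ S} = ⋃ j ∈ S, (fun ω => F ω i) ⁻¹' {j} := by
      ext ω; simp
    have hdisj : (S : Set ℕ).PairwiseDisjoint (fun j => (fun ω => F ω i) ⁻¹' {j}) := by
      intro a _ b _ hab
      refine Set.disjoint_left.mpr fun ω h1 h2 => hab ?_
      simp only [Set.mem_preimage, Set.mem_singleton_iff] at h1 h2
      rw [← h1, ← h2]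
    have hmeasure : μ {ω | F ω i ∈ S} = ∑ j ∈ S, μ ((fun ω => F ω i) ⁻¹' {j}) := by
      rw [hsets, measure_biUnion_finset hdisj
        (fun j _ => (hmeas i hi) (measurableSet_singleton _))]
    have htr : (μ {ω | F ω i ∈ S}).toReal = 1 := by
      rw [hmeasure, ENNReal.toReal_sum (fun j _ => measure_ne_top μ _)]
      rw [← hπ1]
      exact Finset.sum_congr rfl fun j hj => hval i hi j hj
    have hne : μ {ω | F ω i ∈ S} ≠ ⊤ := measure_ne_top μ _
    rw [← ENNReal.ofReal_toReal hne, htr]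
    simp
  set Good : Set Ω := {ω | ∀ i ∈ G, F ω i ∈ S} with hGoodDef
  have hGood_meas : MeasurableSet Good := by
    have : Good = ⋂ i ∈ (G : Set ℕ), {ω | F ω i ∈ S} := by ext ω; simp [hGoodDef]
    rw [this]
    refine MeasurableSet.biInter (Set.to_countable _) (fun i hi => ?_)
    have : {ω | F ω i ∈ S} = ⋃ j ∈ (S : Set ℕ), (fun ω => F ω i) ⁻¹' {j} := by
      ext ω; simp
    rw [this]
    exact MeasurableSet.biUnion (Set.to_countable _)
      (fun j _ => (hmeas i hi) (measurableSet_singleton _))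
  have hGoodc : μ Goodᶜ = 0 := by
    have hsub : Goodᶜ ⊆ ⋃ i ∈ G, {ω | F ω i ∈ S}ᶜ := by
      intro ω hω
      simp only [hGoodDef, Set.mem_compl_iff, Set.mem_setOf_eq, not_forall] at hω
      obtain ⟨i, hi, hωi⟩ := hω
      exact Set.mem_biUnion hi hωi
    refine le_antisymm (le_trans (measure_mono hsub) ?_) zero_le
    refine le_trans (measure_biUnion_finset_le G _) ?_
    have : ∀ i ∈ G, μ {ω | F ω i ∈ S}ᶜ = 0 := by
      intro i hi
      have hm : MeasurableSet {ω | F ω i ∈ S} := by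
        have : {ω | F ω i ∈ S} = ⋃ j ∈ (S : Set ℕ), (fun ω => F ω i) ⁻¹' {j} := by
          ext ω; simp
        rw [this]
        exact MeasurableSet.biUnion (Set.to_countable _)
          (fun j _ => (hmeas i hi) (measurableSet_singleton _))
      rw [measure_compl hm (measure_ne_top μ _), hSival i hi, measure_univ]
      simp
    rw [Finset.sum_congr rfl this]
    simp
  -- event = union of atoms
  have hEvGood : {ω | CycIn G (F ω)} ∩ Good
      = ⋃ V ∈ (Maps S G).filter (fun V => CycIn G V), Atom V := by
    ext ω
    constructor
    · rintro ⟨hcyc, hgood⟩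
      set V : ℕ → ℕ := fun a => if a ∈ G then F ω a else 0 with hVdef
      have hagree : ∀ x ∈ G, F ω x = V x := by
        intro x hx; simp [hVdef, hx]
      have hVm : V ∈ Maps S G := by
        rw [mem_Maps]
        constructor
        · intro a ha; simp only [hVdef, ha, if_true]; exact hgood a ha
        · intro a ha; simp [hVdef, ha]
      refine Set.mem_biUnion (Finset.mem_filter.mpr ⟨hVm, ?_⟩) ?_
      · exact CycIn.congr hagree hcyc
      · intro i hi; exact hagree i hi
    · intro hω
      obtain ⟨V, hV, hωV⟩ := Set.mem_iUnion₂.mp hω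
      have hVfil := Finset.mem_filter.mp hV
      have hagree : ∀ x ∈ G, V x = F ω x := fun x hx => (hωV x hx).symm
      refine ⟨CycIn.congr hagree hVfil.2, ?_⟩
      intro i hi
      rw [hωV i hi]
      exact (mem_Maps.mp hVfil.1).1 i hi
  have hatoms_disj : ((Maps S G).filter (fun V => CycIn G V) : Set (ℕ → ℕ)).PairwiseDisjoint Atom := by
    intro V₁ hV₁ V₂ hV₂ hne
    refine Set.disjoint_left.mpr fun ω h1 h2 => hne ?_
    have hm₁ := mem_Maps.mp (Finset.mem_filter.mp (by simpa using hV₁)).1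
    have hm₂ := mem_Maps.mp (Finset.mem_filter.mp (by simpa using hV₂)).1
    funext a
    by_cases ha : a ∈ G
    · rw [← h1 a ha, ← h2 a ha]
    · rw [hm₁.2 a ha, hm₂.2 a ha]
  -- compute
  have hmain : μ {ω | CycIn G (F ω)} = ∑ V ∈ (Maps S G).filter (fun V => CycIn G V), μ (Atom V) := by
    have h1 : μ ({ω | CycIn G (F ω)} ∩ Good) + μ ({ω | CycIn G (F ω)} \ Good)
        = μ {ω | CycIn G (F ω)} := measure_inter_add_diff _ hGood_meas
    have h2 : μ ({ω | CycIn G (F ω)} \ Good) = 0 :=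
      measure_mono_null (Set.diff_subset_compl _ _) hGoodc
    rw [h2, add_zero] at h1
    rw [← h1, hEvGood, measure_biUnion_finset hatoms_disj (fun V _ => hAtom_meas V)]
  rw [hmain, ENNReal.toReal_sum (fun V _ => measure_ne_top μ _)]
  have hsum1 : ∑ V ∈ (Maps S G).filter (fun V => CycIn G V), (μ (Atom V)).toReal
      = CSum S π G := by
    rw [CSum, Finset.sum_filter]
    refine Finset.sum_congr rfl fun V hV => ?_
    by_cases hc : CycIn G V
    · rw [if_pos hc, if_pos hc, hAtom_toReal V hV]
    · rw [if_neg hc, if_neg hc]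
  rw [hsum1]
  -- final combinatorial identity
  obtain ⟨j₁, hj₁⟩ := hGne
  have hCD : CSum S π G = DSum S π G ∅ j₁ := by
    unfold CSum DSum
    refine Finset.sum_congr rfl fun V _ => ?_
    refine if_congr ⟨Or.inl, ?_⟩ rfl rfl
    rintro (h | h)
    · exact h
    · exact absurd h Reaches_empty
  rw [hCD, main_comb hS0 hπ1 G.card G rfl hGS ∅ (Finset.empty_subset S)
    (Finset.disjoint_right.mpr (fun a ha => absurd ha (Finset.notMem_empty a))) j₁ hj₁]
  simp
end

section
/- For any positive integer n, the number of cycle-free maps f : {1, …, n−1} → {0, 1, …, n−1} equals the number of labeled trees on n vertices. -/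
namespace CycleFreeTrees

open SimpleGraph Walk

variable {n : ℕ} [NeZero n]

/-- The graph associated to a parent function. -/
def tog (F : Fin n → Fin n) : SimpleGraph (Fin n) :=
  SimpleGraph.fromRel (fun a b => a ≠ 0 ∧ F a = b)

section Dep

variable {F : Fin n → Fin n} (hd : ∀ i, ∃ m, F^[m] i = 0)

lemma adj_tog_iff' {a b : Fin n} (h : (tog F).Adj a b) :
    (a ≠ 0 ∧ F a = b) ∨ (b ≠ 0 ∧ F b = a) := by
  rw [tog, SimpleGraph.fromRel_adj] at h
  exact h.2

include hd

/-- Depth: number of steps to reach 0. -/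
def dep (i : Fin n) : ℕ := Nat.find (hd i)

lemma dep_spec (i : Fin n) : F^[dep hd i] i = 0 := Nat.find_spec (hd i)

lemma dep_eq_zero_iff {i : Fin n} : dep hd i = 0 ↔ i = 0 := by
  rw [dep, Nat.find_eq_zero]
  simp

lemma dep_succ {i : Fin n} (hi : i ≠ 0) : dep hd (F i) + 1 = dep hd i := by
  have h1 : 0 < dep hd i := by
    rcases Nat.eq_zero_or_pos (dep hd i) with h | h
    · exact absurd ((dep_eq_zero_iff hd).1 h) hi
    · exact h
  have h2 : dep hd (F i) ≤ dep hd i - 1 := by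
    apply Nat.find_le
    have := dep_spec hd i
    rwa [show dep hd i = (dep hd i - 1) + 1 by omega, Function.iterate_succ_apply] at this
  have h3 : dep hd i ≤ dep hd (F i) + 1 := by
    apply Nat.find_le
    rw [Function.iterate_succ_apply]
    exact dep_spec hd (F i)
  omega

lemma dep_lt {i : Fin n} (hi : i ≠ 0) : dep hd (F i) < dep hd i := by
  have := dep_succ hd hi; omega

lemma F_ne {i : Fin n} (hi : i ≠ 0) : F i ≠ i := by
  intro h
  have := dep_lt hd hi
  rw [h] at this
  omega

lemma adj_tog {i : Fin n} (hi : i ≠ 0) : (tog F).Adj i (F i) := by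
  rw [tog, SimpleGraph.fromRel_adj]
  exact ⟨(F_ne hd hi).symm, Or.inl ⟨hi, rfl⟩⟩

lemma reach_aux : ∀ (m : ℕ) (i : Fin n), dep hd i ≤ m → (tog F).Reachable i 0 := by
  intro m
  induction m with
  | zero =>
    intro i h
    have hi0 : i = 0 := (dep_eq_zero_iff hd).1 (Nat.le_zero.1 h)
    subst hi0
    exact Reachable.refl 0
  | succ m ih =>
    intro i h
    by_cases hi : i = 0
    · subst hi; exact Reachable.refl 0
    · exact ((adj_tog hd hi).reachable).trans (ih (F i) (by have := dep_succ hd hi; omega))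

lemma tog_connected : (tog F).Connected := by
  have : Nonempty (Fin n) := ⟨0⟩
  refine ⟨fun u v => ?_⟩
  exact (reach_aux hd (dep hd u) u le_rfl).trans (reach_aux hd (dep hd v) v le_rfl).symm

lemma tog_acyclic : (tog F).IsAcyclic := by
  intro v c hc
  -- pick vertex of maximal depth on the cycle
  have hne : c.support.toFinset.Nonempty := by
    simp [List.toFinset_nonempty_iff, c.support_ne_nil]
  obtain ⟨u, hu, hmax⟩ := Finset.exists_max_image c.support.toFinset (dep hd) hne
  rw [List.mem_toFinset] at hu
  have hmax' : ∀ z ∈ c.support, dep hd z ≤ dep hd u := by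
    intro z hz; exact hmax z (List.mem_toFinset.2 hz)
  set c' := c.rotate u hu with hc'def
  have hc' : c'.IsCycle := hc.rotate hu
  have hmaxc' : ∀ z ∈ c'.support, dep hd z ≤ dep hd u := by
    intro z hz
    rw [c'.support_eq_cons] at hz
    rcases List.mem_cons.1 hz with h | h
    · exact h ▸ le_rfl
    · exact hmax' z (c.support.mem_of_mem_tail ((support_rotate c u hu).mem_iff.1 h))
  clear_value c'
  cases c' with
  | nil => exact hc'.not_of_nil
  | @cons _ x _ h q =>
    -- q : Walk x u, h : Adj u x
    have hq : q.IsPath := by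
      rw [isPath_def]
      have := (isCycle_def _).1 hc'
      simpa using this.2.2
    have hlen : 2 ≤ q.length := by
      have := hc'.three_le_length
      simp only [length_cons] at this
      omega
    have hx : x ∈ q.support := q.start_mem_support
    -- last edge
    cases hqr : q.reverse with
    | nil =>
      have : q.length = 0 := by
        have := congrArg Walk.length hqr
        simpa [length_reverse] using this
      omega
    | @cons _ y _ h' r =>
      -- h' : Adj u y, r : Walk y x
      have hy : y ∈ q.support := by
        have : y ∈ q.reverse.support := by
          rw [hqr]; simp
        rwa [support_reverse, List.mem_reverse] at this
      have hxy : x ≠ y := by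
        intro hxyeq
        subst hxyeq
        have hqrp : q.reverse.IsPath := (isPath_reverse_iff q).2 hq
        rw [hqr] at hqrp
        have hr : r.IsPath := hqrp.of_cons
        have hrnil : r = Walk.nil := (isPath_iff_eq_nil (p := r)).1 hr
        have hq1 := congrArg Walk.length hqr
        rw [hrnil] at hq1
        simp only [length_reverse, length_cons, length_nil] at hq1
        omega
      have hxmem : x ∈ (Walk.cons h q).support := by simp [hx]
      have hymem : y ∈ (Walk.cons h q).support := by simp [hy]
      have hFux : F u = x := by
        rcases adj_tog_iff' h with ⟨_, hh⟩ | ⟨hx0, hh⟩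
        · exact hh
        · exfalso
          have h1 : dep hd u + 1 = dep hd x := by rw [← hh]; exact dep_succ hd hx0
          have h2 := hmaxc' x hxmem
          omega
      have hFuy : F u = y := by
        rcases adj_tog_iff' h' with ⟨_, hh⟩ | ⟨hy0, hh⟩
        · exact hh
        · exfalso
          have h1 : dep hd u + 1 = dep hd y := by rw [← hh]; exact dep_succ hd hy0
          have h2 := hmaxc' y hymem
          omega
      exact hxy (hFux ▸ hFuy)

lemma tog_isTree : (tog F).IsTree := ⟨tog_connected hd, tog_acyclic hd⟩

/-- The canonical walk to the root. -/
def walkAux : (m : ℕ) → (i : Fin n) → dep hd i ≤ m → (tog F).Walk i 0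
  | 0, i, h =>
    Walk.nil.copy ((dep_eq_zero_iff hd).1 (Nat.le_zero.1 h)).symm rfl
  | m + 1, i, h =>
    if hi : i = 0 then Walk.nil.copy hi.symm rfl
    else Walk.cons (adj_tog hd hi)
      (walkAux m (F i) (by have := dep_succ hd hi; omega))

lemma walkAux_support_dep :
    ∀ (m : ℕ) (i : Fin n) (h : dep hd i ≤ m) (j : Fin n),
      j ∈ (walkAux hd m i h).support → dep hd j ≤ dep hd i := by
  intro m
  induction m with
  | zero =>
    intro i h j hj
    simp only [walkAux, support_copy] at hj
    have hi0 : i = 0 := (dep_eq_zero_iff hd).1 (Nat.le_zero.1 h)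
    simp at hj
    subst hi0
    rw [hj]
  | succ m ih =>
    intro i h j hj
    by_cases hi : i = 0
    · simp only [walkAux, dif_pos hi, support_copy] at hj
      simp at hj
      subst hi
      rw [hj]
    · simp only [walkAux, dif_neg hi, support_cons] at hj
      rcases List.mem_cons.1 hj with h1 | h1
      · exact h1 ▸ le_rfl
      · have := ih (F i) (by have := dep_succ hd hi; omega) j h1
        have h2 := dep_lt hd hi
        omega

lemma walkAux_isPath :
    ∀ (m : ℕ) (i : Fin n) (h : dep hd i ≤ m), (walkAux hd m i h).IsPath := by
  intro m
  induction m with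
  | zero =>
    intro i h
    simp only [walkAux]
    exact (isPath_copy _ _ _).2 IsPath.nil
  | succ m ih =>
    intro i h
    by_cases hi : i = 0
    · simp only [walkAux, dif_pos hi]
      exact (isPath_copy _ _ _).2 IsPath.nil
    · simp only [walkAux, dif_neg hi]
      rw [cons_isPath_iff]
      refine ⟨ih _ _, fun hmem => ?_⟩
      have h1 := walkAux_support_dep hd m (F i) _ i hmem
      have h2 := dep_lt hd hi
      omega

lemma walkAux_snd (m : ℕ) (i : Fin n) (h : dep hd i ≤ m) (hi : i ≠ 0) :
    (walkAux hd m i h).support.tail.head? = some (F i) := by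
  cases m with
  | zero =>
    exact absurd ((dep_eq_zero_iff hd).1 (Nat.le_zero.1 h)) hi
  | succ m =>
    simp only [walkAux, dif_neg hi, support_cons, List.tail_cons]
    rw [(walkAux hd m (F i) _).support_eq_cons]
    rfl

end Dep

/-- injectivity of `tog` on parent functions whose orbits all reach 0 -/
lemma tog_inj {F F' : Fin n → Fin n}
    (hd : ∀ i, ∃ m, F^[m] i = 0) (hd' : ∀ i, ∃ m, F'^[m] i = 0)
    (hEq : tog F = tog F') {i : Fin n} (hi : i ≠ 0) : F i = F' i := by
  set w1 := walkAux hd (dep hd i) i le_rfl with hw1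
  set w2' := walkAux hd' (dep hd' i) i le_rfl with hw2'
  have hsub : ∀ e ∈ w2'.edges, e ∈ (tog F).edgeSet := by
    intro e he
    rw [hEq]
    exact w2'.edges_subset_edgeSet he
  set w2 := w2'.transfer (tog F) hsub with hw2
  have hp1 : w1.IsPath := walkAux_isPath hd _ i le_rfl
  have hp2' : w2'.IsPath := walkAux_isPath hd' _ i le_rfl
  have hp2 : w2.IsPath := by
    rw [isPath_def, hw2, support_transfer]
    exact (isPath_def _).1 hp2'
  have huniq := (tog_isTree hd).existsUnique_path i 0
  have h12 : w1 = w2 := huniq.unique hp1 hp2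
  have hs : w1.support.tail.head? = w2'.support.tail.head? := by
    rw [h12, hw2, support_transfer]
  rw [walkAux_snd hd _ i le_rfl hi, walkAux_snd hd' _ i le_rfl hi] at hs
  exact Option.some_injective _ hs

section FromNat

variable (hn : 0 < n)

/-- Parent function on `Fin n` from a map `ℕ → ℕ`. -/
def Ffun (f : ℕ → ℕ) : Fin n → Fin n :=
  fun i => if h : f (i : ℕ) < n then ⟨f i, h⟩ else 0

lemma compat_Ffun {f : ℕ → ℕ} (h1 : ∀ i ∈ Finset.Ico 1 n, f i < n)
    (h2 : ∀ i ∉ Finset.Ico 1 n, f i = 0) (x : ℕ) (h : x < n) :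
    f x = ((Ffun f ⟨x, h⟩ : Fin n) : ℕ) := by
  have hfx : f x < n := by
    by_cases hx : x ∈ Finset.Ico 1 n
    · exact h1 x hx
    · rw [h2 x hx]; exact n.pos_of_neZero
  simp [Ffun, hfx]

/-- No cycle from depth function. -/
lemma noCycle_of_hd {f : ℕ → ℕ} {F : Fin n → Fin n}
    (hd : ∀ i, ∃ m, F^[m] i = 0)
    (hcompat : ∀ (x : ℕ) (h : x < n), f x = ((F ⟨x, h⟩ : Fin n) : ℕ)) :
    ¬ HasCycle (Finset.Ico 1 n) f := by
  rintro ⟨k, a, hk, hmem, hstep, hlast⟩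
  -- depth on ℕ
  set d : ℕ → ℕ := fun x => if h : x < n then dep hd ⟨x, h⟩ else 0 with hdd
  have key : ∀ x ∈ Finset.Ico 1 n, d (f x) + 1 = d x := by
    intro x hx
    obtain ⟨hx1, hxn⟩ := Finset.mem_Ico.1 hx
    have hfx : f x = ((F ⟨x, hxn⟩ : Fin n) : ℕ) := hcompat x hxn
    have hfxn : f x < n := hfx ▸ (F ⟨x, hxn⟩).isLt
    have hx0 : (⟨x, hxn⟩ : Fin n) ≠ 0 := by
      intro hcon
      have := congrArg Fin.val hcon
      simp at this
      omega
    have : (⟨f x, hfxn⟩ : Fin n) = F ⟨x, hxn⟩ := by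
      apply Fin.ext
      simp [hfx]
    simp only [hdd, dif_pos hfxn, dif_pos hxn, this]
    exact dep_succ hd hx0
  have chain : ∀ j, j < k → d (a j) + j ≤ d (a 0) := by
    intro j
    induction j with
    | zero => intro _; omega
    | succ j ih =>
      intro hj
      have hjk : j < k := by omega
      have hstep' := hstep j (by omega)
      have := key (a j) (hmem j hjk)
      rw [hstep'] at this
      have := ih hjk
      omega
  have hk1 : k - 1 < k := by omega
  have hlast' := key (a (k - 1)) (hmem _ hk1)
  rw [hlast] at hlast'
  have := chain (k - 1) hk1
  omega

lemma cycle_of_rep {f : ℕ → ℕ} (h1 : ∀ i ∈ Finset.Ico 1 n, f i < n)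
    (h2 : ∀ i ∉ Finset.Ico 1 n, f i = 0) {i : Fin n}
    (hcon : ∀ m, (Ffun f)^[m] i ≠ 0) {s t : ℕ} (hlt : s < t)
    (hrep : (Ffun f)^[s] i = (Ffun f)^[t] i) : HasCycle (Finset.Ico 1 n) f := by
  set F := Ffun (n := n) f with hF
  refine ⟨t - s, fun j => ((F^[s + j] i : Fin n) : ℕ), by omega, ?_, ?_, ?_⟩
  · intro j _
    rw [Finset.mem_Ico]
    show 1 ≤ ((F^[s + j] i : Fin n) : ℕ) ∧ ((F^[s + j] i : Fin n) : ℕ) < n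
    refine ⟨?_, (F^[s + j] i).isLt⟩
    have hne := hcon (s + j)
    rcases Nat.eq_zero_or_pos ((F^[s + j] i : Fin n) : ℕ) with h | h
    · exact absurd (Fin.ext (by simpa using h)) hne
    · omega
  · intro j _
    have hlt' := (F^[s + j] i).isLt
    have hc := compat_Ffun h1 h2 ((F^[s + j] i : Fin n) : ℕ) hlt'
    show f ((F^[s + j] i : Fin n) : ℕ) = ((F^[s + (j + 1)] i : Fin n) : ℕ)
    rw [hc, ← hF]
    have h5 : (⟨((F^[s + j] i : Fin n) : ℕ), hlt'⟩ : Fin n) = F^[s + j] i := Fin.ext rfl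
    rw [h5, ← Function.iterate_succ_apply' F (s + j) i,
      show (s + j).succ = s + (j + 1) from by omega]
  · have hlt' := (F^[s + (t - s - 1)] i).isLt
    have hc := compat_Ffun h1 h2 _ hlt'
    show f ((F^[s + (t - s - 1)] i : Fin n) : ℕ) = ((F^[s + 0] i : Fin n) : ℕ)
    rw [hc, ← hF]
    have h5 : (⟨((F^[s + (t - s - 1)] i : Fin n) : ℕ), hlt'⟩ : Fin n) =
        F^[s + (t - s - 1)] i := Fin.ext rfl
    rw [h5, ← Function.iterate_succ_apply' F (s + (t - s - 1)) i,
      show (s + (t - s - 1)).succ = t from by omega, ← hrep]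
    simp

/-- Orbits reach 0 from no-cycle. -/
lemma hd_of_noCycle {f : ℕ → ℕ} (h1 : ∀ i ∈ Finset.Ico 1 n, f i < n)
    (h2 : ∀ i ∉ Finset.Ico 1 n, f i = 0) (h3 : ¬ HasCycle (Finset.Ico 1 n) f) :
    ∀ i : Fin n, ∃ m, (Ffun f)^[m] i = 0 := by
  set F := Ffun (n := n) f with hF
  intro i
  by_contra hcon
  push_neg at hcon
  -- iterates never hit 0, find repetition
  obtain ⟨s, t, hst, hrep⟩ :=
    Finite.exists_ne_map_eq_of_infinite (fun m : ℕ => F^[m] i)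
  -- wlog s < t
  rcases hst.lt_or_gt with hlt | hlt
  case _ => exact h3 (cycle_of_rep h1 h2 hcon hlt hrep)
  case _ => exact h3 (cycle_of_rep h1 h2 hcon hlt hrep.symm)

end FromNat

section Surj

variable {G : SimpleGraph (Fin n)}

lemma exists_parent (hG : G.IsTree) {i : Fin n} (hi : i ≠ 0) :
    ∃ j, G.Adj i j ∧ G.dist j 0 < G.dist i 0 := by
  obtain ⟨p, hp⟩ := hG.isConnected.exists_walk_length_eq_dist i 0
  cases p with
  | nil => exact absurd rfl hi
  | cons h q =>
    refine ⟨_, h, ?_⟩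
    have h1 := SimpleGraph.dist_le q
    have h2 : q.length + 1 = G.dist i 0 := by simpa using hp
    omega

/-- Parent function for a tree. -/
noncomputable def par (hG : G.IsTree) : Fin n → Fin n :=
  fun i => if hi : i = 0 then 0 else Classical.choose (exists_parent hG hi)

lemma par_adj (hG : G.IsTree) {i : Fin n} (hi : i ≠ 0) : G.Adj i (par hG i) := by
  rw [par, dif_neg hi]
  exact (Classical.choose_spec (exists_parent hG hi)).1

lemma par_dist (hG : G.IsTree) {i : Fin n} (hi : i ≠ 0) :
    G.dist (par hG i) 0 < G.dist i 0 := by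
  rw [par, dif_neg hi]
  exact (Classical.choose_spec (exists_parent hG hi)).2

lemma par_zero (hG : G.IsTree) : par hG 0 = 0 := dif_pos rfl

lemma hd_par_aux (hG : G.IsTree) :
    ∀ (m : ℕ) (i : Fin n), G.dist i 0 ≤ m → ∃ k, (par hG)^[k] i = 0 := by
  intro m
  induction m with
  | zero =>
    intro i h
    have : i = 0 := (hG.isConnected.dist_eq_zero_iff).1 (Nat.le_zero.1 h)
    exact ⟨0, this⟩
  | succ m ih =>
    intro i h
    by_cases hi : i = 0
    · exact ⟨0, hi⟩
    · obtain ⟨k, hk⟩ := ih (par hG i) (by have := par_dist hG hi; omega)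
      exact ⟨k + 1, by rw [Function.iterate_succ_apply, hk]⟩

lemma hd_par (hG : G.IsTree) : ∀ i : Fin n, ∃ k, (par hG)^[k] i = 0 :=
  fun i => hd_par_aux hG (G.dist i 0) i le_rfl

lemma tog_par_eq (hG : G.IsTree) : tog (par hG) = G := by
  have hdp := hd_par hG
  have hle : tog (par hG) ≤ G := by
    intro a b hab
    rcases adj_tog_iff' hab with ⟨ha, h⟩ | ⟨hb, h⟩
    · exact h ▸ par_adj hG ha
    · exact (h ▸ par_adj hG hb).symm
  have ht1 : (tog (par hG)).IsTree := tog_isTree hdp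
  classical
  haveI : Fintype (tog (par hG)).edgeSet := Fintype.ofFinite _
  haveI : Fintype G.edgeSet := Fintype.ofFinite _
  have hsub : (tog (par hG)).edgeFinset ⊆ G.edgeFinset := SimpleGraph.edgeFinset_mono hle
  have hc1 := ht1.card_edgeFinset
  have hc2 := hG.card_edgeFinset
  have heq : (tog (par hG)).edgeFinset = G.edgeFinset :=
    Finset.eq_of_subset_of_card_le hsub (by omega)
  exact SimpleGraph.edgeFinset_inj.1 heq

end Surj

end CycleFreeTrees

/-- For any positive integer `n`, the number of cycle-free maps
`f : {1, …, n-1} → {0, 1, …, n-1}` (encoded as functions `ℕ → ℕ` vanishing outside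
`{1, …, n-1} = Finset.Ico 1 n`) equals the number of labeled trees on `n` vertices,
i.e. connected acyclic simple graphs on the vertex set `{0, 1, …, n-1}`. -/
theorem card_cycleFree_eq_card_trees (n : ℕ) (hn : 0 < n) :
    {f : ℕ → ℕ | (∀ i ∈ Finset.Ico 1 n, f i < n) ∧
      (∀ i ∉ Finset.Ico 1 n, f i = 0) ∧ ¬ HasCycle (Finset.Ico 1 n) f}.ncard =
    {G : SimpleGraph (Fin n) | G.IsTree}.ncard := by
  haveI : NeZero n := ⟨hn.ne'⟩
  classical
  open CycleFreeTrees in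
  set A := {f : ℕ → ℕ | (∀ i ∈ Finset.Ico 1 n, f i < n) ∧
      (∀ i ∉ Finset.Ico 1 n, f i = 0) ∧ ¬ HasCycle (Finset.Ico 1 n) f} with hA
  set Φ : (ℕ → ℕ) → SimpleGraph (Fin n) := fun f => tog (Ffun f) with hΦ
  have hinj : Set.InjOn Φ A := by
    rintro f ⟨hf1, hf2, hf3⟩ g ⟨hg1, hg2, hg3⟩ hEq
    have hdF := hd_of_noCycle hf1 hf2 hf3
    have hdG := hd_of_noCycle hg1 hg2 hg3
    funext x
    by_cases hx : x ∈ Finset.Ico 1 n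
    · obtain ⟨hx1, hxn⟩ := Finset.mem_Ico.1 hx
      have h0 : (⟨x, hxn⟩ : Fin n) ≠ 0 := by
        intro hcon
        have := congrArg Fin.val hcon
        simp at this
        omega
      have hFG := tog_inj hdF hdG hEq h0
      rw [compat_Ffun hf1 hf2 x hxn, compat_Ffun hg1 hg2 x hxn, hFG]
    · rw [hf2 x hx, hg2 x hx]
  have himg : Φ '' A = {G : SimpleGraph (Fin n) | G.IsTree} := by
    apply Set.Subset.antisymm
    · rintro G ⟨f, ⟨hf1, hf2, hf3⟩, rfl⟩
      exact tog_isTree (hd_of_noCycle hf1 hf2 hf3)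
    · intro G hG
      simp only [Set.mem_setOf_eq] at hG
      set f : ℕ → ℕ := fun x =>
        if h : x ∈ Finset.Ico 1 n then ((par hG ⟨x, (Finset.mem_Ico.1 h).2⟩ : Fin n) : ℕ)
        else 0 with hf
      have hf1 : ∀ i ∈ Finset.Ico 1 n, f i < n := by
        intro i hi
        rw [hf]
        simp only [dif_pos hi]
        exact (par hG _).isLt
      have hf2 : ∀ i ∉ Finset.Ico 1 n, f i = 0 := by
        intro i hi
        rw [hf]
        simp only [dif_neg hi]
      have fcompat : ∀ (x : ℕ) (h : x < n), f x = ((par hG ⟨x, h⟩ : Fin n) : ℕ) := by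
        intro x h
        by_cases hx : x ∈ Finset.Ico 1 n
        · rw [hf]; simp only [dif_pos hx]
        · have hx0 : x = 0 := by
            rw [Finset.mem_Ico] at hx
            omega
          subst hx0
          have : (⟨0, h⟩ : Fin n) = 0 := rfl
          rw [hf2 0 hx, this, par_zero hG]
          rfl
      have hf3 : ¬ HasCycle (Finset.Ico 1 n) f := by
        apply noCycle_of_hd (hd_par hG)
        exact fcompat
      refine ⟨f, ⟨hf1, hf2, hf3⟩, ?_⟩
      have h4 : Ffun f = par hG := by
        funext i
        apply Fin.ext
        have e1 := compat_Ffun hf1 hf2 (i : ℕ) i.isLt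
        have e2 := fcompat (i : ℕ) i.isLt
        rw [Fin.eta] at e1 e2
        rw [← e1, e2]
      show tog (Ffun f) = G
      rw [h4]
      exact tog_par_eq hG
  rw [← himg]
  exact (Set.ncard_image_of_injOn hinj).symm
end
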